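/- arXiv:1902.01150 — 3 statements merged into one kernel-verified Lean document; each statement's English description precedes it below -/
import Mathlib

section
/- Let m, n ≥ 1, let Y_1, …, Y_m be i.i.d. isotropic log-concave random vectors in ℝ^n, let A = (A_{ij}) be a deterministic m×n real matrix, and set X_{ij} = A_{ij} Y_{ij}. Then for every p, q ≥ 2 there exists a universal constant c > 0 (independent of all parameters) such that 𝔼‖X‖_{p',q} ≥ c [ max_{i≤m} ‖A_i‖_p + max_{j≤n} ‖A^{(j)}‖_q + 𝔼 max_{i≤m, j≤n} |X_{ij}| ]. -/
open MeasureTheory ProbabilityTheory Real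
open scoped Pointwise

noncomputable section

/-- The `ℓ_r` norm of a vector indexed by a finite type. -/
def pNorm {ι : Type*} [Fintype ι] (r : ℝ) (x : ι → ℝ) : ℝ :=
  (∑ k, |x k| ^ r) ^ (1 / r)

/-- The operator norm of an `m × n` matrix from `ℓ_{p'}^n` to `ℓ_q^m`. -/
def opNorm {m n : ℕ} (p' q : ℝ) (A : Fin m → Fin n → ℝ) : ℝ :=
  sSup {c : ℝ | ∃ t : Fin n → ℝ, pNorm p' t ≤ 1 ∧ c = pNorm q (fun i => ∑ j, A i j * t j)}

/-- A random vector is log-concave if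
`P(Z ∈ λK + (1-λ)L) ≥ P(Z ∈ K)^λ P(Z ∈ L)^(1-λ)` for all compact nonempty `K, L`. -/
def IsLogConcave {Ω ι : Type*} [MeasurableSpace Ω] [Fintype ι] (P : Measure Ω)
    (Z : Ω → (ι → ℝ)) : Prop :=
  ∀ K L : Set (ι → ℝ), K.Nonempty → L.Nonempty → IsCompact K → IsCompact L →
    ∀ lam : ℝ, lam ∈ Set.Icc (0 : ℝ) 1 →
      P {ω | Z ω ∈ K} ^ lam * P {ω | Z ω ∈ L} ^ (1 - lam) ≤
        P {ω | Z ω ∈ lam • K + (1 - lam) • L}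

/-- A random vector is isotropic if it is centred and its covariance matrix is the identity. -/
def IsIsotropic {Ω ι : Type*} [MeasurableSpace Ω] [Fintype ι] [DecidableEq ι] (P : Measure Ω)
    (Z : Ω → (ι → ℝ)) : Prop :=
  (∀ i, ∫ ω, Z ω i ∂P = 0) ∧
    ∀ i j, ∫ ω, Z ω i * Z ω j ∂P = if i = j then 1 else 0

/-- A random vector is unconditional if flipping the signs of any subset of its coordinates
does not change its distribution. -/
def IsUnconditional {Ω ι : Type*} [MeasurableSpace Ω] [Fintype ι] (P : Measure Ω)
    (Z : Ω → (ι → ℝ)) : Prop :=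
  ∀ η : ι → ℝ, (∀ k, η k = 1 ∨ η k = -1) →
    IdentDistrib Z (fun ω k => η k * Z ω k) P P

/-- Membership in the unit ball of the dual norm of `ℓ_p`, i.e. `‖t‖_{p'} ≤ 1` where
`p'` is the Hölder conjugate of `p` (this also makes sense for `p = 1`, where `p' = ∞`). -/
def inDualBall {ι : Type*} [Fintype ι] (p : ℝ) (t : ι → ℝ) : Prop :=
  ∀ x : ι → ℝ, pNorm p x ≤ 1 → |∑ i, t i * x i| ≤ 1

section pnorm
variable {ι : Type*} [Fintype ι] {r : ℝ} {x y : ι → ℝ}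

lemma sum_abs_rpow_nonneg : (0:ℝ) ≤ ∑ k, |x k| ^ r :=
  Finset.sum_nonneg fun k _ => Real.rpow_nonneg (abs_nonneg _) _

lemma pNorm_nonneg : 0 ≤ pNorm r x := Real.rpow_nonneg sum_abs_rpow_nonneg _

lemma abs_le_pNorm (hr : 0 < r) (j : ι) : |x j| ≤ pNorm r x := by
  have h1 : |x j| = (|x j| ^ r) ^ (1/r) := by
    rw [one_div, Real.rpow_rpow_inv (abs_nonneg _) hr.ne']
  rw [h1]
  apply Real.rpow_le_rpow (Real.rpow_nonneg (abs_nonneg _) _)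
  · exact Finset.single_le_sum (f := fun k => |x k| ^ r)
      (fun k _ => Real.rpow_nonneg (abs_nonneg _) _) (Finset.mem_univ j)
  · positivity

lemma pNorm_zero (hr : 0 < r) : pNorm r (fun _ : ι => (0:ℝ)) = 0 := by
  simp [pNorm, Real.zero_rpow hr.ne', Real.zero_rpow (by positivity : r⁻¹ ≠ (0:ℝ))]

lemma pNorm_congr_abs (h : ∀ k, |x k| = |y k|) : pNorm r x = pNorm r y := by
  unfold pNorm
  congr 1
  exact Finset.sum_congr rfl fun k _ => by rw [h k]

lemma pNorm_mono (hr : 0 < r) (h : ∀ k, |x k| ≤ |y k|) : pNorm r x ≤ pNorm r y := by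
  apply Real.rpow_le_rpow sum_abs_rpow_nonneg _ (by positivity)
  exact Finset.sum_le_sum fun k _ => Real.rpow_le_rpow (abs_nonneg _) (h k) hr.le

lemma pNorm_le_sum_abs (hr : 1 ≤ r) : pNorm r x ≤ ∑ k, |x k| := by
  have hr0 : 0 < r := lt_of_lt_of_le zero_lt_one hr
  set S := ∑ k, |x k| with hS
  have hS0 : 0 ≤ S := Finset.sum_nonneg fun k _ => abs_nonneg _
  rcases eq_or_lt_of_le hS0 with h0 | hpos
  · have hall : ∀ k, |x k| = 0 := by
      intro k
      have := Finset.sum_eq_zero_iff_of_nonneg (fun k (_ : k ∈ Finset.univ) => abs_nonneg (x k))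
      exact (this.mp h0.symm) k (Finset.mem_univ k)
    have : pNorm r x = 0 := by
      unfold pNorm
      rw [Finset.sum_eq_zero fun k _ => by rw [hall k, Real.zero_rpow hr0.ne'],
        Real.zero_rpow (by positivity)]
    rw [this, ← h0]
  · have hkey : ∑ k, |x k| ^ r ≤ S ^ r := by
      have : ∀ k ∈ Finset.univ, |x k| ^ r ≤ |x k| * S ^ (r - 1) := by
        intro k _
        rcases eq_or_lt_of_le (abs_nonneg (x k)) with h0k | hposk
        · rw [← h0k, Real.zero_rpow hr0.ne', zero_mul]
        · have : |x k| ^ r = |x k| * |x k| ^ (r - 1) := by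
            rw [← Real.rpow_one_add' (abs_nonneg _) (by linarith)]
            ring_nf
          rw [this]
          apply mul_le_mul_of_nonneg_left _ (abs_nonneg _)
          exact Real.rpow_le_rpow (abs_nonneg _)
            (Finset.single_le_sum (fun k _ => abs_nonneg (x k)) (Finset.mem_univ k))
            (by linarith)
      calc ∑ k, |x k| ^ r ≤ ∑ k, |x k| * S ^ (r-1) := Finset.sum_le_sum this
        _ = S * S ^ (r-1) := by rw [← Finset.sum_mul]
        _ = S ^ r := by
            rw [← Real.rpow_one_add' hS0 (by linarith)]
            ring_nf
    calc pNorm r x ≤ (S ^ r) ^ (1/r) :=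
          Real.rpow_le_rpow sum_abs_rpow_nonneg hkey (by positivity)
      _ = S := by rw [one_div, Real.rpow_rpow_inv hS0 hr0.ne']

lemma pNorm_single (hr : 0 < r) (j : ι) [DecidableEq ι] :
    pNorm r (fun k => if k = j then (1:ℝ) else 0) = 1 := by
  unfold pNorm
  rw [Finset.sum_eq_single j]
  · simp [Real.one_rpow]
  · intro k _ hk
    simp [hk, Real.zero_rpow hr.ne']
  · simp

lemma pNorm_add_le {x y : ι → ℝ} (hr : 1 ≤ r) :
    pNorm r (fun k => x k + y k) ≤ pNorm r x + pNorm r y :=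
  Real.Lp_add_le Finset.univ x y hr

end pnorm

section duality
variable {ι : Type*} [Fintype ι]

lemma rpow_mul_self {x s : ℝ} (hx : 0 ≤ x) (hs : 0 ≤ s) : x ^ s * x = x ^ (s + 1) := by
  rw [Real.rpow_add' hx (by linarith), Real.rpow_one]

lemma pNorm_rpow_eq_sum {r : ℝ} (hr : 0 < r) (v : ι → ℝ) :
    (pNorm r v) ^ r = ∑ k, |v k| ^ r := by
  unfold pNorm
  rw [one_div, Real.rpow_inv_rpow sum_abs_rpow_nonneg hr.ne']

lemma dual_pNorm_eq_one {r r' : ℝ} (hconj : r.HolderConjugate r') (v : ι → ℝ)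
    (hN : 0 < pNorm r v) :
    pNorm r' (fun k => |v k| ^ (r - 1) / (pNorm r v) ^ (r - 1)) = 1 := by
  set N := pNorm r v with hNdef
  have hr0 : 0 < r := hconj.pos
  have hNr : N ^ r = ∑ k, |v k| ^ r := pNorm_rpow_eq_sum hr0 v
  have hNrpos : 0 < N ^ r := Real.rpow_pos_of_pos hN r
  have hsub : (r - 1) * r' = r := hconj.sub_one_mul_conj
  unfold pNorm
  have hterm : ∀ k, (abs (|v k| ^ (r-1) / N ^ (r-1))) ^ r' = |v k| ^ r / N ^ r := by
    intro k
    have h1 : (0:ℝ) ≤ |v k| ^ (r-1) / N ^ (r-1) := by positivity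
    rw [abs_of_nonneg h1, Real.div_rpow (by positivity) (by positivity),
      ← Real.rpow_mul (abs_nonneg _), ← Real.rpow_mul hN.le, hsub]
  rw [Finset.sum_congr rfl fun k _ => hterm k, ← Finset.sum_div, ← hNr,
    div_self hNrpos.ne', Real.one_rpow]

lemma dual_sum_eq_pNorm {r : ℝ} (hr : 1 < r) (v : ι → ℝ) (hN : 0 < pNorm r v) :
    ∑ k, (|v k| ^ (r - 1) / (pNorm r v) ^ (r - 1)) * |v k| = pNorm r v := by
  set N := pNorm r v with hNdef
  have hr0 : 0 < r := by linarith
  have hNr : N ^ r = ∑ k, |v k| ^ r := pNorm_rpow_eq_sum hr0 v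
  have hterm : ∀ k, (|v k| ^ (r-1) / N ^ (r-1)) * |v k| = |v k| ^ r / N ^ (r-1) := by
    intro k
    rw [div_mul_eq_mul_div, rpow_mul_self (abs_nonneg _) (by linarith), sub_add_cancel]
  rw [Finset.sum_congr rfl fun k _ => hterm k, ← Finset.sum_div, ← hNr]
  have hstep : N ^ r = N ^ (r-1) * N := by
    rw [rpow_mul_self hN.le (by linarith), sub_add_cancel]
  rw [hstep]
  exact mul_div_cancel_left₀ N (Real.rpow_pos_of_pos hN _).ne'

/-- Hölder: for the dual unit vector `u` of `v`, `∑ u k * |w k| ≤ ‖w‖_r`. -/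
lemma dual_mul_le_pNorm {r r' : ℝ} (hconj : r.HolderConjugate r') (v w : ι → ℝ)
    (hN : 0 < pNorm r v) :
    ∑ k, (|v k| ^ (r - 1) / (pNorm r v) ^ (r - 1)) * |w k| ≤ pNorm r w := by
  obtain ⟨N, hNdef⟩ : ∃ N, pNorm r v = N := ⟨_, rfl⟩
  rw [hNdef] at hN ⊢
  have h2 : pNorm r' (fun k => |v k| ^ (r - 1) / N ^ (r - 1)) = 1 := by
    rw [← hNdef] at hN ⊢
    exact dual_pNorm_eq_one hconj v hN
  have h := Real.inner_le_Lp_mul_Lq (Finset.univ)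
    (fun k => |v k| ^ (r - 1) / N ^ (r - 1)) (fun k => |w k|) hconj.symm
  unfold pNorm at h2 ⊢
  calc ∑ k, (|v k| ^ (r - 1) / N ^ (r - 1)) * |w k|
      ≤ (∑ k, (abs (|v k| ^ (r - 1) / N ^ (r - 1))) ^ r') ^ (1/r') *
        (∑ k, (abs |w k|) ^ r) ^ (1/r) := h
    _ = (∑ k, (abs |w k|) ^ r) ^ (1/r) := by rw [h2, one_mul]
    _ = (∑ k, |w k| ^ r) ^ (1/r) := by
        congr 1
        exact Finset.sum_congr rfl fun k _ => by rw [abs_abs]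

end duality
section opnorm
variable {m n : ℕ} {p' q : ℝ}

lemma opNorm_zero_mem (hp' : 0 < p') (hq1 : 0 < q) (A : Fin m → Fin n → ℝ) :
    (0:ℝ) ∈ {c : ℝ | ∃ t : Fin n → ℝ, pNorm p' t ≤ 1 ∧
      c = pNorm q (fun i => ∑ j, A i j * t j)} := by
  refine ⟨fun _ => 0, ?_, ?_⟩
  · rw [pNorm_zero hp']; norm_num
  · have : (fun i : Fin m => ∑ j, A i j * (0:ℝ)) = (fun _ : Fin m => (0:ℝ)) := by
      funext i; simp
    rw [this, pNorm_zero hq1]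

lemma opNorm_set_bound (hp' : 1 ≤ p') (hq1 : 1 ≤ q) (A : Fin m → Fin n → ℝ) :
    ∀ c ∈ {c : ℝ | ∃ t : Fin n → ℝ, pNorm p' t ≤ 1 ∧
      c = pNorm q (fun i => ∑ j, A i j * t j)}, c ≤ ∑ i, ∑ j, |A i j| := by
  rintro c ⟨t, ht, rfl⟩
  have htj : ∀ j, |t j| ≤ 1 := fun j =>
    le_trans (abs_le_pNorm (by linarith) j) ht
  calc pNorm q (fun i => ∑ j, A i j * t j) ≤ ∑ i, |∑ j, A i j * t j| :=
        pNorm_le_sum_abs hq1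
    _ ≤ ∑ i, ∑ j, |A i j| := by
        apply Finset.sum_le_sum
        intro i _
        calc |∑ j, A i j * t j| ≤ ∑ j, |A i j * t j| := Finset.abs_sum_le_sum_abs _ _
          _ ≤ ∑ j, |A i j| := by
              apply Finset.sum_le_sum
              intro j _
              rw [abs_mul]
              exact mul_le_of_le_one_right (abs_nonneg _) (htj j)

lemma opNorm_bddAbove (hp' : 1 ≤ p') (hq1 : 1 ≤ q) (A : Fin m → Fin n → ℝ) :
    BddAbove {c : ℝ | ∃ t : Fin n → ℝ, pNorm p' t ≤ 1 ∧
      c = pNorm q (fun i => ∑ j, A i j * t j)} :=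
  ⟨_, opNorm_set_bound hp' hq1 A⟩

lemma le_opNorm (hp' : 1 ≤ p') (hq1 : 1 ≤ q) (A : Fin m → Fin n → ℝ)
    (t : Fin n → ℝ) (ht : pNorm p' t ≤ 1) :
    pNorm q (fun i => ∑ j, A i j * t j) ≤ opNorm p' q A :=
  le_csSup (opNorm_bddAbove hp' hq1 A) ⟨t, ht, rfl⟩

lemma opNorm_nonneg (hp' : 1 ≤ p') (hq1 : 1 ≤ q) (A : Fin m → Fin n → ℝ) :
    0 ≤ opNorm p' q A :=
  le_csSup (opNorm_bddAbove hp' hq1 A) (opNorm_zero_mem (by linarith) (by linarith) A)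

lemma opNorm_le_sum (hp' : 1 ≤ p') (hq1 : 1 ≤ q) (A : Fin m → Fin n → ℝ) :
    opNorm p' q A ≤ ∑ i, ∑ j, |A i j| :=
  csSup_le ⟨0, opNorm_zero_mem (by linarith) (by linarith) A⟩ (opNorm_set_bound hp' hq1 A)

lemma opNorm_sub_le (hp' : 1 ≤ p') (hq1 : 1 ≤ q) (A B : Fin m → Fin n → ℝ) :
    opNorm p' q A ≤ opNorm p' q B + ∑ i, ∑ j, |A i j - B i j| := by
  apply csSup_le ⟨0, opNorm_zero_mem (by linarith) (by linarith) A⟩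
  rintro c ⟨t, ht, rfl⟩
  have hsplit : (fun i => ∑ j, A i j * t j) =
      (fun i => (∑ j, B i j * t j) + ∑ j, (A i j - B i j) * t j) := by
    funext i
    rw [← Finset.sum_add_distrib]
    exact Finset.sum_congr rfl fun j _ => by ring
  calc pNorm q (fun i => ∑ j, A i j * t j)
      ≤ pNorm q (fun i => ∑ j, B i j * t j) + pNorm q (fun i => ∑ j, (A i j - B i j) * t j) := by
        rw [hsplit]; exact pNorm_add_le hq1
    _ ≤ opNorm p' q B + ∑ i, ∑ j, |A i j - B i j| := by
        apply add_le_add (le_opNorm hp' hq1 B t ht)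
        exact opNorm_set_bound hp' hq1 (fun i j => A i j - B i j) _ ⟨t, ht, rfl⟩

lemma continuous_opNorm (hp' : 1 ≤ p') (hq1 : 1 ≤ q) :
    Continuous (fun A : Fin m → Fin n → ℝ => opNorm p' q A) := by
  rw [Metric.continuous_iff]
  intro A ε hε
  refine ⟨ε / (m * n + 1), by positivity, fun B hB => ?_⟩
  have hbd : ∀ i j, |B i j - A i j| ≤ dist B A := by
    intro i j
    calc |B i j - A i j| = dist (B i j) (A i j) := by rw [Real.dist_eq]
      _ ≤ dist (B i) (A i) := dist_le_pi_dist (B i) (A i) j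
      _ ≤ dist B A := dist_le_pi_dist B A i
  have hsum : ∀ (C D : Fin m → Fin n → ℝ), (∀ i j, |C i j - D i j| ≤ dist B A) →
      ∑ i, ∑ j, |C i j - D i j| ≤ (m * n) * dist B A := by
    intro C D h
    calc ∑ i, ∑ j, |C i j - D i j| ≤ ∑ _i : Fin m, ∑ _j : Fin n, dist B A :=
          Finset.sum_le_sum fun i _ => Finset.sum_le_sum fun j _ => h i j
      _ = (m * n) * dist B A := by
          simp [Finset.sum_const, Finset.card_univ]
          ring
  have h1 : opNorm p' q B ≤ opNorm p' q A + (m*n) * dist B A :=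
    le_trans (opNorm_sub_le hp' hq1 B A) (by
      have := hsum B A hbd
      linarith)
  have h2 : opNorm p' q A ≤ opNorm p' q B + (m*n) * dist B A :=
    le_trans (opNorm_sub_le hp' hq1 A B) (by
      have := hsum A B (fun i j => by rw [abs_sub_comm]; exact hbd i j)
      linarith)
  have hd : dist (opNorm p' q B) (opNorm p' q A) ≤ (m*n) * dist B A := by
    rw [Real.dist_eq, abs_le]
    constructor <;> linarith
  have hfin : ((m:ℝ) * n) * dist B A < ε := by
    have hmn : (0:ℝ) ≤ (m:ℝ) * n := by positivity
    have hle : ((m:ℝ)*n) * dist B A ≤ ((m:ℝ)*n) * (ε / (m*n+1)) :=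
      mul_le_mul_of_nonneg_left (le_of_lt hB) hmn
    have hlt : ((m:ℝ)*n) * (ε / (m*n+1)) < ε := by
      rw [mul_div_assoc', div_lt_iff₀ (by positivity)]
      nlinarith
    linarith
  linarith [hd]

end opnorm
section anticonc
open Filter Topology

lemma three_mul_le (k : ℕ) : 3 * k + 2 ≤ 2 ^ k + 4 := by
  induction k with
  | zero => norm_num
  | succ k ih =>
    rcases Nat.lt_or_ge k 2 with hk | hk
    · interval_cases k <;> norm_num
    · have h2 : 3 ≤ 2 ^ k := le_trans (by norm_num) (Nat.pow_le_pow_right (by norm_num) hk)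
      have e : 2 ^ (k+1) = 2 * 2 ^ k := by ring
      omega

lemma geom_block (k : ℕ) : (4:ℝ)^(k+1) * (1/2)^(2^k) ≤ 16 * (1/2)^k := by
  have h4 : (4:ℝ)^(k+1) = 2^(2*(k+1)) := by
    rw [show (4:ℝ) = 2^2 by norm_num, ← pow_mul]
  have hhalf : ∀ j : ℕ, ((1:ℝ)/2)^j = ((2:ℝ)^j)⁻¹ := by
    intro j; rw [div_pow, one_pow, ← inv_eq_one_div]
  rw [h4, hhalf, hhalf, show (16:ℝ) = 2^4 by norm_num]
  rw [mul_inv_le_iff₀ (by positivity)]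
  rw [show (2:ℝ)^4 * ((2:ℝ)^k)⁻¹ * 2^(2^k) = ((2:ℝ)^k)⁻¹ * 2^(4 + 2^k) by
    rw [pow_add]; ring]
  rw [le_inv_mul_iff₀ (by positivity), ← pow_add]
  apply pow_le_pow_right₀ (by norm_num)
  have := three_mul_le k
  omega

lemma geom_sum_le_two (K : ℕ) : ∑ k ∈ Finset.range K, ((1:ℝ)/2)^k ≤ 2 := by
  have h := geom_sum_eq (by norm_num : ((1:ℝ)/2) ≠ 1) K
  rw [h]
  have h1 : (0:ℝ) ≤ (1/2)^K := by positivity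
  have h2 : ((1:ℝ)/2)^K ≤ 1 := pow_le_one₀ (by norm_num) (by norm_num)
  rw [div_le_iff_of_neg (by norm_num : ((1:ℝ)/2 - 1) < 0)]
  linarith

end anticonc
section anticonc2
open Filter Topology

variable {Ω : Type} [MeasurableSpace Ω]

set_option maxHeartbeats 2000000 in
lemma anticoncentration (P : Measure Ω) [IsProbabilityMeasure P]
    (W : Ω → ℝ) (hWm : Measurable W)
    (hW2 : ∫ ω, W ω * W ω ∂P = 1)
    (hg : ∀ s t : ℝ, P {ω | s ≤ W ω} * P {ω | t ≤ W ω} ≤ P {ω | (s+t)/2 ≤ W ω} ^ 2)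
    (hf : ∀ s t : ℝ, P {ω | W ω ≤ s} * P {ω | W ω ≤ t} ≤ P {ω | W ω ≤ (s+t)/2} ^ 2) :
    1/50 ≤ ∫ ω, |W ω| ∂P := by
  -- integrability
  have hInt2 : Integrable (fun ω => W ω * W ω) P := by
    by_contra h
    rw [integral_undef h] at hW2
    norm_num at hW2
  have hIntA : Integrable (fun ω => |W ω|) P := by
    apply Integrable.mono' ((integrable_const (1:ℝ)).add hInt2)
      hWm.abs.aestronglyMeasurable
    filter_upwards with ω
    rw [Real.norm_eq_abs, abs_abs]
    simp only [Pi.add_apply]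
    nlinarith [sq_nonneg (|W ω| - 1), abs_mul_abs_self (W ω), abs_nonneg (W ω),
      sq_abs (W ω), pow_two (W ω), pow_two (|W ω|)]
  set a := ∫ ω, |W ω| ∂P with hadef
  have ha0 : 0 ≤ a := integral_nonneg fun ω => abs_nonneg _
  have hapos : 0 < a := by
    rcases eq_or_lt_of_le ha0 with h | h
    · exfalso
      have hzero : (fun ω => |W ω|) =ᵐ[P] 0 :=
        (integral_eq_zero_iff_of_nonneg (fun ω => abs_nonneg _) hIntA).mp h.symm
      have hz2 : (fun ω => W ω * W ω) =ᵐ[P] 0 := by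
        filter_upwards [hzero] with ω hω
        have : |W ω| = 0 := hω
        have : W ω = 0 := abs_eq_zero.mp this
        simp [this]
      have hzz : ∫ ω, W ω * W ω ∂P = 0 := by
        rw [integral_congr_ae hz2]
        simp
      rw [hzz] at hW2
      norm_num at hW2
    · exact h
  -- Markov
  have hMk : ∀ u : ℝ, u * (P {ω | u ≤ |W ω|}).toReal ≤ a :=
    fun u => mul_meas_ge_le_integral_of_nonneg (Eventually.of_forall fun ω => abs_nonneg _)
      hIntA u
  -- tail functions
  set G : ℝ → ℝ := fun s => (P {ω | s ≤ W ω}).toReal with hGdef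
  set F : ℝ → ℝ := fun s => (P {ω | W ω ≤ s}).toReal with hFdef
  have hGnn : ∀ s, 0 ≤ G s := fun s => ENNReal.toReal_nonneg
  have hFnn : ∀ s, 0 ≤ F s := fun s => ENNReal.toReal_nonneg
  have hGmid : ∀ s t, G s * G t ≤ G ((s+t)/2)^2 := by
    intro s t
    have h1 := hg s t
    have h2 : (P {ω | s ≤ W ω} * P {ω | t ≤ W ω}).toReal ≤
        (P {ω | (s+t)/2 ≤ W ω} ^ 2).toReal :=
      ENNReal.toReal_mono (ENNReal.pow_ne_top (measure_ne_top P _)) h1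
    rwa [ENNReal.toReal_mul, ENNReal.toReal_pow] at h2
  have hFmid : ∀ s t, F s * F t ≤ F ((s+t)/2)^2 := by
    intro s t
    have h2 : (P {ω | W ω ≤ s} * P {ω | W ω ≤ t}).toReal ≤
        (P {ω | W ω ≤ (s+t)/2} ^ 2).toReal :=
      ENNReal.toReal_mono (ENNReal.pow_ne_top (measure_ne_top P _)) (hf s t)
    rwa [ENNReal.toReal_mul, ENNReal.toReal_pow] at h2
  -- Markov tail bounds
  have hG4 : G (4*a) ≤ 1/4 := by
    have hsub : {ω | 4*a ≤ W ω} ⊆ {ω | 4*a ≤ |W ω|} := by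
      intro ω h
      simp only [Set.mem_setOf_eq] at h ⊢
      exact le_trans h (le_abs_self _)
    have h1 : G (4*a) ≤ (P {ω | 4*a ≤ |W ω|}).toReal :=
      ENNReal.toReal_mono (measure_ne_top P _) (measure_mono hsub)
    have h2 := hMk (4*a)
    have h0 : (0:ℝ) ≤ (P {ω | 4*a ≤ |W ω|}).toReal := ENNReal.toReal_nonneg
    nlinarith
  have hF4 : F (-(4*a)) ≤ 1/4 := by
    have hsub : {ω | W ω ≤ -(4*a)} ⊆ {ω | 4*a ≤ |W ω|} := by
      intro ω h
      simp only [Set.mem_setOf_eq] at h ⊢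
      have : 4*a ≤ -(W ω) := by linarith
      exact le_trans this (neg_le_abs _)
    have h1 : F (-(4*a)) ≤ (P {ω | 4*a ≤ |W ω|}).toReal :=
      ENNReal.toReal_mono (measure_ne_top P _) (measure_mono hsub)
    have h2 := hMk (4*a)
    have h0 : (0:ℝ) ≤ (P {ω | 4*a ≤ |W ω|}).toReal := ENNReal.toReal_nonneg
    nlinarith
  -- lower bounds at base points
  have hsplit_univ : ∀ S : Set Ω, 1 ≤ (P S).toReal + (P Sᶜ).toReal := by
    intro S
    have h1 : (1:ENNReal) = P (S ∪ Sᶜ) := by rw [Set.union_compl_self, measure_univ]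
    have h2 : P (S ∪ Sᶜ) ≤ P S + P Sᶜ := measure_union_le _ _
    have h3 : (P (S ∪ Sᶜ)).toReal ≤ (P S + P Sᶜ).toReal :=
      ENNReal.toReal_mono (by
        exact ENNReal.add_ne_top.mpr ⟨measure_ne_top P _, measure_ne_top P _⟩) h2
    rw [← h1, ENNReal.toReal_one, ENNReal.toReal_add (measure_ne_top P _)
      (measure_ne_top P _)] at h3
    exact h3
  have hGb : 1/2 ≤ G (-(3*a)) := by
    have hsubc : {ω | -(3*a) ≤ W ω}ᶜ ⊆ {ω | 3*a ≤ |W ω|} := by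
      intro ω h
      simp only [Set.mem_compl_iff, Set.mem_setOf_eq, not_le] at h
      simp only [Set.mem_setOf_eq]
      have : 3*a ≤ -(W ω) := by linarith
      exact le_trans this (neg_le_abs _)
    have h1 : (P {ω | -(3*a) ≤ W ω}ᶜ).toReal ≤ (P {ω | 3*a ≤ |W ω|}).toReal :=
      ENNReal.toReal_mono (measure_ne_top P _) (measure_mono hsubc)
    have h2 := hMk (3*a)
    have h3 := hsplit_univ {ω | -(3*a) ≤ W ω}
    have h0 : (0:ℝ) ≤ (P {ω | 3*a ≤ |W ω|}).toReal := ENNReal.toReal_nonneg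
    nlinarith
  have hFb : 1/2 ≤ F (3*a) := by
    have hsubc : {ω | W ω ≤ 3*a}ᶜ ⊆ {ω | 3*a ≤ |W ω|} := by
      intro ω h
      simp only [Set.mem_compl_iff, Set.mem_setOf_eq, not_le] at h
      simp only [Set.mem_setOf_eq]
      exact le_trans (le_of_lt h) (le_abs_self _)
    have h1 : (P {ω | W ω ≤ 3*a}ᶜ).toReal ≤ (P {ω | 3*a ≤ |W ω|}).toReal :=
      ENNReal.toReal_mono (measure_ne_top P _) (measure_mono hsubc)
    have h2 := hMk (3*a)
    have h3 := hsplit_univ {ω | W ω ≤ 3*a}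
    have h0 : (0:ℝ) ≤ (P {ω | 3*a ≤ |W ω|}).toReal := ENNReal.toReal_nonneg
    nlinarith
  -- the scale sequence
  set T : ℕ → ℝ := fun k => 7*a*2^k - 3*a with hTdef
  have hT0 : T 0 = 4*a := by simp [hTdef]; ring
  have hTrec : ∀ k, T (k+1) = 2 * T k + 3*a := by
    intro k
    simp only [hTdef, pow_succ]
    ring
  have hTpos : ∀ k, 0 < T k := by
    intro k
    have h2k : (1:ℝ) ≤ 2^k := one_le_pow₀ (by norm_num)
    simp only [hTdef]
    nlinarith
  have hTle : ∀ k, T k ≤ 7*a*2^k := by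
    intro k
    simp only [hTdef]
    nlinarith
  -- doubling bounds on the tails
  have hGk : ∀ k, G (T k) ≤ (1/2)^(2^k + 1) := by
    intro k
    induction k with
    | zero =>
      rw [hT0]
      norm_num
      linarith [hG4]
    | succ k ih =>
      have hmid : (-(3*a) + T (k+1))/2 = T k := by rw [hTrec]; ring
      have h1 := hGmid (-(3*a)) (T (k+1))
      rw [hmid] at h1
      have h2 : (1/2) * G (T (k+1)) ≤ G (T k)^2 := by
        calc (1/2) * G (T (k+1)) ≤ G (-(3*a)) * G (T (k+1)) :=
              mul_le_mul_of_nonneg_right hGb (hGnn _)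
          _ ≤ G (T k)^2 := h1
      have h3 : G (T (k+1)) ≤ 2 * ((1/2)^(2^k+1))^2 := by
        have : G (T k)^2 ≤ ((1/2)^(2^k+1))^2 :=
          pow_le_pow_left₀ (hGnn _) ih 2
        linarith
      calc G (T (k+1)) ≤ 2 * ((1/2)^(2^k+1))^2 := h3
        _ = (1/2)^(2^(k+1) + 1) := by
            rw [← pow_mul]
            have he : (2^k+1)*2 = (2^(k+1) + 1) + 1 := by
              rw [pow_succ]; ring
            rw [he, pow_succ]
            ring
  have hFk : ∀ k, F (-(T k)) ≤ (1/2)^(2^k + 1) := by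
    intro k
    induction k with
    | zero =>
      rw [hT0]
      norm_num
      linarith [hF4]
    | succ k ih =>
      have hmid : (3*a + -(T (k+1)))/2 = -(T k) := by rw [hTrec]; ring
      have h1 := hFmid (3*a) (-(T (k+1)))
      rw [hmid] at h1
      have h2 : (1/2) * F (-(T (k+1))) ≤ F (-(T k))^2 := by
        calc (1/2) * F (-(T (k+1))) ≤ F (3*a) * F (-(T (k+1))) :=
              mul_le_mul_of_nonneg_right hFb (hFnn _)
          _ ≤ F (-(T k))^2 := mul_comm (F (3*a)) (F (-(T (k+1)))) ▸ h1
      have h3 : F (-(T (k+1))) ≤ 2 * ((1/2)^(2^k+1))^2 := by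
        have : F (-(T k))^2 ≤ ((1/2)^(2^k+1))^2 :=
          pow_le_pow_left₀ (hFnn _) ih 2
        linarith
      calc F (-(T (k+1))) ≤ 2 * ((1/2)^(2^k+1))^2 := h3
        _ = (1/2)^(2^(k+1) + 1) := by
            rw [← pow_mul]
            have he : (2^k+1)*2 = (2^(k+1) + 1) + 1 := by
              rw [pow_succ]; ring
            rw [he, pow_succ]
            ring
  have htail : ∀ k, (P {ω | T k < |W ω|}).toReal ≤ (1/2)^(2^k) := by
    intro k
    have hsub : {ω | T k < |W ω|} ⊆ {ω | T k ≤ W ω} ∪ {ω | W ω ≤ -(T k)} := by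
      intro ω h
      simp only [Set.mem_setOf_eq, Set.mem_union] at h ⊢
      rcases le_or_gt 0 (W ω) with h0 | h0
      · left; rw [abs_of_nonneg h0] at h; linarith
      · right; rw [abs_of_neg h0] at h; linarith
    have h1 : (P {ω | T k < |W ω|}).toReal ≤
        (P ({ω | T k ≤ W ω} ∪ {ω | W ω ≤ -(T k)})).toReal :=
      ENNReal.toReal_mono (measure_ne_top P _) (measure_mono hsub)
    have h2 : (P ({ω | T k ≤ W ω} ∪ {ω | W ω ≤ -(T k)})).toReal ≤
        G (T k) + F (-(T k)) := by
      have hle := measure_union_le (μ := P) {ω | T k ≤ W ω} {ω | W ω ≤ -(T k)}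
      have := ENNReal.toReal_mono (ENNReal.add_ne_top.mpr
        ⟨measure_ne_top P _, measure_ne_top P _⟩) hle
      rwa [ENNReal.toReal_add (measure_ne_top P _) (measure_ne_top P _)] at this
    have h3 := hGk k
    have h4 := hFk k
    have h5 : G (T k) + F (-(T k)) ≤ 2 * (1/2)^(2^k + 1) := by linarith
    have h6 : 2 * ((1:ℝ)/2)^(2^k + 1) = (1/2)^(2^k) := by
      rw [pow_succ]; ring
    linarith
  -- pointwise truncation bound
  have hptwise : ∀ K : ℕ, ∀ ω, min (W ω * W ω) ((T K)^2) ≤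
      49*a^2 + ∑ k ∈ Finset.range K,
        Set.indicator {ω' | T k < |W ω'|} (fun _ => (T (k+1))^2 - (T k)^2) ω := by
    intro K
    induction K with
    | zero =>
      intro ω
      simp only [Finset.range_zero, Finset.sum_empty, add_zero]
      have hTT0 : (T 0)^2 = 16*a^2 := by rw [hT0]; ring
      calc min (W ω * W ω) ((T 0)^2) ≤ (T 0)^2 := min_le_right _ _
        _ ≤ 49*a^2 := by rw [hTT0]; nlinarith
    | succ K ih =>
      intro ω
      rw [Finset.sum_range_succ]
      have hTT : (T K)^2 ≤ (T (K+1))^2 := by nlinarith [hTpos K, hapos, hTrec K]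
      rcases le_or_gt (|W ω|) (T K) with h | h
      · have hw2 : W ω * W ω ≤ (T K)^2 := by
          nlinarith [abs_mul_abs_self (W ω), mul_self_le_mul_self (abs_nonneg (W ω)) h,
            pow_two (T K)]
        have hmin1 : min (W ω * W ω) ((T (K+1))^2) = W ω * W ω :=
          min_eq_left (le_trans hw2 hTT)
        have hmin2 : min (W ω * W ω) ((T K)^2) = W ω * W ω := min_eq_left hw2
        have hind : 0 ≤ Set.indicator {ω' | T K < |W ω'|}
            (fun _ => (T (K+1))^2 - (T K)^2) ω :=
          Set.indicator_nonneg (fun _ _ => by linarith) ω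
        have hih := ih ω
        rw [hmin2] at hih
        rw [hmin1]
        linarith
      · have hind : Set.indicator {ω' | T K < |W ω'|}
            (fun _ => (T (K+1))^2 - (T K)^2) ω = (T (K+1))^2 - (T K)^2 :=
          Set.indicator_of_mem (show ω ∈ {ω' | T K < |W ω'|} from h) _
        have hmin2 : min (W ω * W ω) ((T K)^2) = (T K)^2 :=
          min_eq_right (by
            nlinarith [abs_mul_abs_self (W ω),
              mul_self_le_mul_self (hTpos K).le h.le, pow_two (T K)])
        have hih := ih ω
        rw [hmin2] at hih
        have hminle : min (W ω * W ω) ((T (K+1))^2) ≤ (T (K+1))^2 := min_le_right _ _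
        rw [hind]
        linarith
  have hms : ∀ k : ℕ, MeasurableSet {ω' | T k < |W ω'|} :=
    fun k => measurableSet_lt measurable_const hWm.abs
  have hIndInt : ∀ k : ℕ, Integrable (fun ω => Set.indicator {ω' | T k < |W ω'|}
      (fun _ => (T (k+1))^2 - (T k)^2) ω) P :=
    fun k => (integrable_const _).indicator (hms k)
  have hminnn : ∀ K : ℕ, ∀ ω, 0 ≤ min (W ω * W ω) ((T K)^2) :=
    fun K ω => le_min (mul_self_nonneg _) (by positivity)
  have hIntMin : ∀ K : ℕ, Integrable (fun ω => min (W ω * W ω) ((T K)^2)) P := by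
    intro K
    apply Integrable.mono' hInt2 (((hWm.mul hWm).min measurable_const).aestronglyMeasurable)
    filter_upwards with ω
    rw [Real.norm_eq_abs, Pi.mul_apply, abs_of_nonneg (hminnn K ω)]
    exact min_le_left _ _
  have hsumbound : ∀ K : ℕ, ∫ ω, min (W ω * W ω) ((T K)^2) ∂P ≤ 49*a^2*33 := by
    intro K
    have hIntRHS : Integrable (fun ω => 49*a^2 + ∑ k ∈ Finset.range K,
        Set.indicator {ω' | T k < |W ω'|} (fun _ => (T (k+1))^2 - (T k)^2) ω) P :=
      (integrable_const _).add (integrable_finset_sum _ fun k _ => hIndInt k)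
    have h1 : ∫ ω, min (W ω * W ω) ((T K)^2) ∂P ≤
        ∫ ω, (49*a^2 + ∑ k ∈ Finset.range K, Set.indicator {ω' | T k < |W ω'|}
          (fun _ => (T (k+1))^2 - (T k)^2) ω) ∂P :=
      integral_mono (hIntMin K) hIntRHS (hptwise K)
    have h2 : ∫ ω, (49*a^2 + ∑ k ∈ Finset.range K, Set.indicator {ω' | T k < |W ω'|}
          (fun _ => (T (k+1))^2 - (T k)^2) ω) ∂P
        = 49*a^2 + ∑ k ∈ Finset.range K,
            ((T (k+1))^2 - (T k)^2) * (P {ω' | T k < |W ω'|}).toReal := by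
      rw [integral_add (integrable_const _) (integrable_finset_sum _ fun k _ => hIndInt k),
        integral_const, integral_finset_sum _ fun k _ => hIndInt k]
      simp only [measure_univ, probReal_univ, ENNReal.toReal_one, smul_eq_mul, one_mul]
      congr 1
      refine Finset.sum_congr rfl fun k _ => ?_
      rw [integral_indicator_const _ (hms k), smul_eq_mul, measureReal_def]
      ring
    have h3 : ∑ k ∈ Finset.range K,
        ((T (k+1))^2 - (T k)^2) * (P {ω' | T k < |W ω'|}).toReal ≤ 49*a^2*32 := by
      have hterm : ∀ k ∈ Finset.range K,
          ((T (k+1))^2 - (T k)^2) * (P {ω' | T k < |W ω'|}).toReal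
            ≤ 49*a^2 * (16 * (1/2)^k) := by
        intro k _
        have hπ := htail k
        have hπ0 : (0:ℝ) ≤ (P {ω' | T k < |W ω'|}).toReal := ENNReal.toReal_nonneg
        have hsq : (T (k+1))^2 ≤ 49*a^2*4^(k+1) := by
          have hh1 : (T (k+1))^2 ≤ (7*a*2^(k+1))^2 :=
            pow_le_pow_left₀ (hTpos (k+1)).le (hTle (k+1)) 2
          have hh2 : (7*a*2^(k+1))^2 = 49*a^2*4^(k+1) := by
            have : ((2:ℝ)^(k+1))^2 = 4^(k+1) := by
              rw [← pow_mul, show (4:ℝ) = 2^2 by norm_num, ← pow_mul, mul_comm]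
            rw [mul_pow, mul_pow, this]
            ring
          linarith [hh1, hh2.le, hh2.ge]
        have hd : (T (k+1))^2 - (T k)^2 ≤ 49*a^2*4^(k+1) := by
          nlinarith [sq_nonneg (T k)]
        calc ((T (k+1))^2 - (T k)^2) * (P {ω' | T k < |W ω'|}).toReal
            ≤ (49*a^2*4^(k+1)) * ((1/2)^(2^k)) := by
              apply mul_le_mul hd hπ hπ0 (by positivity)
          _ = 49*a^2 * (4^(k+1) * (1/2)^(2^k)) := by ring
          _ ≤ 49*a^2 * (16*(1/2)^k) :=
              mul_le_mul_of_nonneg_left (geom_block k) (by positivity)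
      calc ∑ k ∈ Finset.range K,
          ((T (k+1))^2 - (T k)^2) * (P {ω' | T k < |W ω'|}).toReal
          ≤ ∑ k ∈ Finset.range K, 49*a^2*(16*(1/2)^k) := Finset.sum_le_sum hterm
        _ = 49*a^2*16 * ∑ k ∈ Finset.range K, (1/2)^k := by
            rw [Finset.mul_sum]
            exact Finset.sum_congr rfl fun k _ => by ring
        _ ≤ 49*a^2*16*2 := by
            have := geom_sum_le_two K
            nlinarith [sq_nonneg a]
        _ = 49*a^2*32 := by ring
    linarith
  have hconv : Tendsto (fun K => ∫ ω, min (W ω * W ω) ((T K)^2) ∂P) atTop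
      (𝓝 (∫ ω, W ω * W ω ∂P)) := by
    apply tendsto_integral_of_dominated_convergence (fun ω => W ω * W ω)
      (fun K => ((hWm.mul hWm).min measurable_const).aestronglyMeasurable)
      hInt2
      (fun K => by
        filter_upwards with ω
        rw [Real.norm_eq_abs, Pi.mul_apply, abs_of_nonneg (hminnn K ω)]
        exact min_le_left _ _)
    filter_upwards with ω
    obtain ⟨N, hN⟩ := exists_nat_ge (|W ω| / (7*a))
    apply tendsto_atTop_of_eventually_const (i₀ := N)
    intro K hK
    have hTK : |W ω| ≤ T K := by
      have h2K : (K:ℝ) + 1 ≤ 2^K := by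
        have hn : K + 1 ≤ 2^K := Nat.lt_two_pow_self
        exact_mod_cast hn
      have hwN : |W ω| ≤ 7*a*N := by
        rw [div_le_iff₀ (by positivity)] at hN
        linarith
      have hNK : (N:ℝ) ≤ K := by exact_mod_cast hK
      have h7 : 7*a*(N:ℝ) ≤ 7*a*K := by nlinarith
      simp only [hTdef]
      nlinarith
    have : W ω * W ω ≤ (T K)^2 := by
      nlinarith [abs_mul_abs_self (W ω), mul_self_le_mul_self (abs_nonneg (W ω)) hTK,
        pow_two (T K)]
    exact min_eq_left this
  have hlim : ∫ ω, W ω * W ω ∂P ≤ 49*a^2*33 :=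
    le_of_tendsto' hconv hsumbound
  rw [hW2] at hlim
  by_contra hcon
  push_neg at hcon
  have h1 : a^2 < (1/50)*a := by nlinarith
  have h2 : (1/50)*a < (1/50)*(1/50) := by nlinarith
  nlinarith

end anticonc2
section transfer
open Filter Topology

lemma sq_rpow_half (z : ENNReal) : (z ^ ((1:ℝ)/2)) ^ (2:ℕ) = z := by
  rw [← ENNReal.rpow_natCast (z ^ ((1:ℝ)/2)) 2, ← ENNReal.rpow_mul]
  norm_num

lemma tail_midpoint {Ω : Type} [MeasurableSpace Ω] (P : Measure Ω) [IsProbabilityMeasure P]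
    {n : ℕ} (Y : Ω → Fin n → ℝ) (hLC : IsLogConcave P Y) (j : Fin n)
    (ε : ℝ) (hε : ε = 1 ∨ ε = -1) (s t : ℝ) :
    P {ω | s ≤ ε * Y ω j} * P {ω | t ≤ ε * Y ω j} ≤ P {ω | (s+t)/2 ≤ ε * Y ω j} ^ (2:ℕ) := by
  have hε2 : ε * ε = 1 := by rcases hε with h | h <;> rw [h] <;> norm_num
  have hεabs : |ε| = 1 := by rcases hε with h | h <;> rw [h] <;> norm_num
  set R : ℕ → ℝ := fun N => max (max |s| |t|) N with hRdef
  have hRs : ∀ N, |s| ≤ R N := fun N => le_trans (le_max_left _ _) (le_max_left _ _)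
  have hRt : ∀ N, |t| ≤ R N := fun N => le_trans (le_max_right _ _) (le_max_left _ _)
  have hRN : ∀ N : ℕ, (N:ℝ) ≤ R N := fun N => le_max_right _ _
  have hRmono : ∀ N N' : ℕ, N ≤ N' → R N ≤ R N' := by
    intro N N' h
    exact max_le_max le_rfl (by exact_mod_cast h)
  set C : ℝ → ℕ → Set (Fin n → ℝ) :=
    fun u N => {x | u ≤ ε * x j ∧ ∀ k, |x k| ≤ R N} with hCdef
  -- compactness
  have hCcompact : ∀ u N, IsCompact (C u N) := by
    intro u N
    have heq : C u N = (Set.univ.pi fun _ : Fin n => Set.Icc (-(R N)) (R N)) ∩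
        {x | u ≤ ε * x j} := by
      ext x
      simp only [hCdef, Set.mem_setOf_eq, Set.mem_inter_iff, Set.mem_pi, Set.mem_univ,
        forall_true_left, Set.mem_Icc, ← abs_le, true_implies]
      tauto
    rw [heq]
    exact (isCompact_univ_pi fun _ => isCompact_Icc).inter_right
      (isClosed_le continuous_const (continuous_const.mul (continuous_apply j)))
  -- nonemptiness: assuming |u| ≤ R N
  have hCne : ∀ (u : ℝ) (N : ℕ), |u| ≤ R N → (C u N).Nonempty := by
    intro u N hu
    refine ⟨fun k => if k = j then ε * |u| else 0, ?_, ?_⟩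
    · show u ≤ ε * (if j = j then ε * |u| else 0)
      rw [if_pos rfl]
      calc u ≤ |u| := le_abs_self u
        _ = (ε * ε) * |u| := by rw [hε2, one_mul]
        _ = ε * (ε * |u|) := by ring
    · intro k
      show |if k = j then ε * |u| else 0| ≤ R N
      by_cases hk : k = j
      · rw [if_pos hk, abs_mul, hεabs, one_mul, abs_abs]
        exact hu
      · rw [if_neg hk, abs_zero]
        exact le_trans (abs_nonneg u) hu
  -- per-N inequality
  have hperN : ∀ N : ℕ,
      P {ω | Y ω ∈ C s N} * P {ω | Y ω ∈ C t N} ≤ P {ω | (s+t)/2 ≤ ε * Y ω j} ^ (2:ℕ) := by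
    intro N
    have h1 := hLC (C s N) (C t N) (hCne s N (hRs N)) (hCne t N (hRt N))
      (hCcompact s N) (hCcompact t N) (1/2) (by constructor <;> norm_num)
    have hsub : {ω | Y ω ∈ (1/2 : ℝ) • (C s N) + (1 - 1/2 : ℝ) • (C t N)} ⊆
        {ω | (s+t)/2 ≤ ε * Y ω j} := by
      intro ω hω
      simp only [Set.mem_setOf_eq] at hω ⊢
      rw [Set.mem_add] at hω
      obtain ⟨u, hu, v, hv, huv⟩ := hω
      obtain ⟨cu, hcu, hcueq⟩ := hu
      obtain ⟨cv, hcv, hcveq⟩ := hv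
      have hcu1 : s ≤ ε * cu j := hcu.1
      have hcv1 : t ≤ ε * cv j := hcv.1
      have hYj : Y ω j = (1/2) * cu j + (1/2) * cv j := by
        rw [← huv, ← hcueq, ← hcveq]
        norm_num
      rw [hYj]
      nlinarith [hcu1, hcv1]
    have h2 : P {ω | Y ω ∈ (1/2 : ℝ) • (C s N) + (1 - 1/2 : ℝ) • (C t N)} ≤
        P {ω | (s+t)/2 ≤ ε * Y ω j} := measure_mono hsub
    have h3 : P {ω | Y ω ∈ C s N} ^ ((1:ℝ)/2) * P {ω | Y ω ∈ C t N} ^ (1 - (1:ℝ)/2) ≤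
        P {ω | (s+t)/2 ≤ ε * Y ω j} := le_trans h1 h2
    have h4 : (P {ω | Y ω ∈ C s N} ^ ((1:ℝ)/2) * P {ω | Y ω ∈ C t N} ^ (1 - (1:ℝ)/2)) ^ (2:ℕ)
        ≤ P {ω | (s+t)/2 ≤ ε * Y ω j} ^ (2:ℕ) := pow_le_pow_left₀ zero_le h3 2
    have h5 : (P {ω | Y ω ∈ C s N} ^ ((1:ℝ)/2) * P {ω | Y ω ∈ C t N} ^ (1 - (1:ℝ)/2)) ^ (2:ℕ)
        = P {ω | Y ω ∈ C s N} * P {ω | Y ω ∈ C t N} := by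
      rw [show (1 - (1:ℝ)/2) = (1:ℝ)/2 by norm_num, mul_pow, sq_rpow_half, sq_rpow_half]
    rwa [h5] at h4
  -- monotone limits
  have hEmono : ∀ u : ℝ, Monotone (fun N => {ω | Y ω ∈ C u N}) := by
    intro u N N' h ω hω
    simp only [hCdef, Set.mem_setOf_eq] at hω ⊢
    exact ⟨hω.1, fun k => le_trans (hω.2 k) (hRmono N N' h)⟩
  have hEunion : ∀ u : ℝ, (⋃ N, {ω | Y ω ∈ C u N}) = {ω | u ≤ ε * Y ω j} := by
    intro u
    ext ω
    simp only [Set.mem_iUnion, hCdef, Set.mem_setOf_eq]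
    constructor
    · rintro ⟨N, h1, _⟩
      exact h1
    · intro h
      obtain ⟨N, hN⟩ := exists_nat_ge (∑ k, |Y ω k|)
      refine ⟨N, h, fun k => ?_⟩
      have h1 : |Y ω k| ≤ ∑ k', |Y ω k'| :=
        Finset.single_le_sum (f := fun k' => |Y ω k'|) (fun k' _ => abs_nonneg _)
          (Finset.mem_univ k)
      exact le_trans (le_trans h1 hN) (hRN N)
  have htendG : ∀ u : ℝ, Tendsto (fun N => P {ω | Y ω ∈ C u N}) atTop
      (𝓝 (P {ω | u ≤ ε * Y ω j})) := by
    intro u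
    have := tendsto_measure_iUnion_atTop (μ := P) (hEmono u)
    rwa [hEunion u] at this
  have hprod : Tendsto (fun N => P {ω | Y ω ∈ C s N} * P {ω | Y ω ∈ C t N}) atTop
      (𝓝 (P {ω | s ≤ ε * Y ω j} * P {ω | t ≤ ε * Y ω j})) :=
    ENNReal.Tendsto.mul (htendG s) (Or.inr (measure_ne_top P _)) (htendG t)
      (Or.inr (measure_ne_top P _))
  exact le_of_tendsto' hprod hperN

end transfer

set_option maxHeartbeats 2000000 in
theorem statement1 :
    ∃ c : ℝ, 0 < c ∧
      ∀ (m n : ℕ), 1 ≤ m → 1 ≤ n →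
      ∀ (Ω : Type) [MeasurableSpace Ω] (P : Measure Ω), IsProbabilityMeasure P →
      ∀ Y : Fin m → Ω → (Fin n → ℝ),
        (∀ i, Measurable (Y i)) →
        iIndepFun Y P →
        (∀ i j, IdentDistrib (Y i) (Y j) P P) →
        (∀ i, IsLogConcave P (Y i)) →
        (∀ i, IsIsotropic P (Y i)) →
      ∀ A : Fin m → Fin n → ℝ,
      ∀ p q p' : ℝ, 2 ≤ p → 2 ≤ q → 1 / p + 1 / p' = 1 →
        c * ((⨆ i, pNorm p (A i)) + (⨆ j, pNorm q (fun i => A i j))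
            + ∫ ω, ⨆ i, ⨆ j, |A i j * Y i ω j| ∂P) ≤
          ∫ ω, opNorm p' q (fun i j => A i j * Y i ω j) ∂P := by
  refine ⟨1/150, by norm_num, ?_⟩
  intro m n hm hn Ω _ P hP Y hYmeas _hindep _hident hLC hiso A p q p' hp hq hpp'
  haveI := hP
  haveI : Nonempty (Fin m) := ⟨⟨0, hm⟩⟩
  haveI : Nonempty (Fin n) := ⟨⟨0, hn⟩⟩
  -- exponents
  have hp1 : 1 < p := by linarith
  have hq1 : 1 ≤ q := by linarith
  have hq0 : (0:ℝ) < q := by linarith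
  have hconjp : p.HolderConjugate p' :=
    Real.holderConjugate_iff.mpr ⟨hp1, by rw [inv_eq_one_div, inv_eq_one_div]; exact hpp'⟩
  have hp'1 : 1 ≤ p' := hconjp.symm.lt.le
  have hconjq : q.HolderConjugate (q.conjExponent) := Real.HolderConjugate.conjExponent (by linarith)
  -- measurability
  have hYij : ∀ i j, Measurable (fun ω => Y i ω j) :=
    fun i j => (measurable_pi_apply j).comp (hYmeas i)
  have hXmeas : Measurable (fun ω => (fun i j => A i j * Y i ω j)) :=
    measurable_pi_lambda _ fun i => measurable_pi_lambda _ fun j =>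
      measurable_const.mul (hYij i j)
  -- second moments
  have hY2 : ∀ i j, ∫ ω, Y i ω j * Y i ω j ∂P = 1 := by
    intro i j
    have := (hiso i).2 j j
    simpa using this
  -- anticoncentration
  have hEY : ∀ i j, 1/50 ≤ ∫ ω, |Y i ω j| ∂P := by
    intro i j
    apply anticoncentration P (fun ω => Y i ω j) (hYij i j) (hY2 i j)
    · intro s t
      have h := tail_midpoint P (Y i) (hLC i) j 1 (Or.inl rfl) s t
      simpa only [one_mul] using h
    · intro s t
      have h := tail_midpoint P (Y i) (hLC i) j (-1) (Or.inr rfl) (-s) (-t)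
      have e1 : ∀ u : ℝ, {ω | -u ≤ (-1:ℝ) * Y i ω j} = {ω | Y i ω j ≤ u} := by
        intro u
        ext ω
        simp only [Set.mem_setOf_eq]
        constructor <;> intro hh <;> linarith
      have e2 : (-s + -t)/2 = -((s+t)/2) := by ring
      rw [e2, e1, e1, e1] at h
      exact h
  -- integrability
  have hIntY2 : ∀ i j, Integrable (fun ω => Y i ω j * Y i ω j) P := by
    intro i j
    by_contra h
    have h2 := hY2 i j
    rw [integral_undef h] at h2
    norm_num at h2
  have hIntAbsY : ∀ i j, Integrable (fun ω => |Y i ω j|) P := by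
    intro i j
    apply Integrable.mono' ((integrable_const (1:ℝ)).add (hIntY2 i j))
      (hYij i j).abs.aestronglyMeasurable
    filter_upwards with ω
    rw [Real.norm_eq_abs, abs_abs]
    simp only [Pi.add_apply]
    nlinarith [sq_nonneg (|Y i ω j| - 1), abs_mul_abs_self (Y i ω j), abs_nonneg (Y i ω j)]
  have hIntAbsX : ∀ i j, Integrable (fun ω => |A i j * Y i ω j|) P := by
    intro i j
    have he : (fun ω => |A i j * Y i ω j|) = fun ω => |A i j| * |Y i ω j| :=
      funext fun ω => abs_mul _ _
    rw [he]
    exact (hIntAbsY i j).const_mul _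
  have hIntSum : Integrable (fun ω => ∑ i, ∑ j, |A i j * Y i ω j|) P :=
    integrable_finset_sum _ fun i _ =>
      integrable_finset_sum _ fun j _ => hIntAbsX i j
  have hOpMeas : Measurable (fun ω => opNorm p' q (fun i j => A i j * Y i ω j)) :=
    (continuous_opNorm hp'1 hq1).measurable.comp hXmeas
  have hOpInt : Integrable (fun ω => opNorm p' q (fun i j => A i j * Y i ω j)) P := by
    apply Integrable.mono' hIntSum hOpMeas.aestronglyMeasurable
    filter_upwards with ω
    rw [Real.norm_eq_abs, abs_of_nonneg (opNorm_nonneg hp'1 hq1 _)]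
    exact opNorm_le_sum hp'1 hq1 _
  have hOpNonneg : 0 ≤ ∫ ω, opNorm p' q (fun i j => A i j * Y i ω j) ∂P :=
    integral_nonneg fun ω => opNorm_nonneg hp'1 hq1 _
  -- pointwise column bound
  have hcol_pt : ∀ ω (j : Fin n), pNorm q (fun i => A i j * Y i ω j) ≤
      opNorm p' q (fun i j => A i j * Y i ω j) := by
    intro ω j
    have he : pNorm p' (fun k : Fin n => if k = j then (1:ℝ) else 0) = 1 :=
      pNorm_single (by linarith) j
    have h := le_opNorm hp'1 hq1 (fun i j => A i j * Y i ω j)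
      (fun k => if k = j then (1:ℝ) else 0) he.le
    have hsum : (fun i => ∑ k, (A i k * Y i ω k) * (if k = j then (1:ℝ) else 0)) =
        (fun i => A i j * Y i ω j) := by
      funext i
      rw [Finset.sum_eq_single j]
      · rw [if_pos rfl, mul_one]
      · intro k _ hk
        rw [if_neg hk, mul_zero]
      · intro hj
        exact absurd (Finset.mem_univ j) hj
    rwa [hsum] at h
  -- pointwise row bound
  have hrow_pt : ∀ ω (i : Fin m), pNorm p (fun j => A i j * Y i ω j) ≤
      opNorm p' q (fun i j => A i j * Y i ω j) := by
    intro ω i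
    rcases eq_or_lt_of_le (pNorm_nonneg (r := p) (x := fun j => A i j * Y i ω j)) with h0 | hpos
    · rw [← h0]
      exact opNorm_nonneg hp'1 hq1 _
    · obtain ⟨v, hvdef⟩ : ∃ v : Fin n → ℝ, v = fun j => A i j * Y i ω j := ⟨_, rfl⟩
      rw [← hvdef] at hpos ⊢
      obtain ⟨N, hNdef⟩ : ∃ N : ℝ, N = pNorm p v := ⟨_, rfl⟩
      rw [← hNdef] at hpos ⊢
      set tt : Fin n → ℝ := fun k => (|v k| ^ (p-2) * v k) / N ^ (p-1) with httdef
      have habs_tt : ∀ k, |tt k| = |v k| ^ (p-1) / N ^ (p-1) := by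
        intro k
        rw [httdef]
        simp only
        rw [abs_div, abs_mul, abs_of_nonneg (Real.rpow_nonneg (abs_nonneg _) _),
          abs_of_pos (Real.rpow_pos_of_pos hpos _)]
        congr 1
        rw [rpow_mul_self (abs_nonneg _) (by linarith : (0:ℝ) ≤ p - 2)]
        congr 1
        ring
      have htt_norm : pNorm p' tt = 1 := by
        have hcongr : pNorm p' tt = pNorm p' (fun k => |v k| ^ (p-1) / N ^ (p-1)) := by
          apply pNorm_congr_abs
          intro k
          rw [habs_tt k]
          exact (abs_of_nonneg (show (0:ℝ) ≤ |v k| ^ (p-1) / N ^ (p-1) by positivity)).symm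
        rw [hcongr, hNdef]
        exact dual_pNorm_eq_one hconjp v (hNdef ▸ hpos)
      have hsum : ∑ k, v k * tt k = N := by
        have hterm : ∀ k, v k * tt k = |v k| ^ p / N ^ (p-1) := by
          intro k
          rw [httdef]
          simp only
          rw [mul_div_assoc']
          congr 1
          have hvv : v k * (|v k| ^ (p-2) * v k) = |v k| ^ (p-2) * (|v k| * |v k|) := by
            rw [abs_mul_abs_self]
            ring
          rw [hvv, ← mul_assoc, rpow_mul_self (abs_nonneg _) (by linarith : (0:ℝ) ≤ p - 2),
            rpow_mul_self (abs_nonneg _) (by linarith : (0:ℝ) ≤ p - 2 + 1)]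
          congr 1
          ring
        rw [Finset.sum_congr rfl fun k _ => hterm k, ← Finset.sum_div]
        have hNp : ∑ k, |v k| ^ p = N ^ p := by
          rw [hNdef]
          exact (pNorm_rpow_eq_sum (by linarith) v).symm
        rw [hNp]
        have hstep : N ^ p = N ^ (p-1) * N := by
          rw [rpow_mul_self hpos.le (by linarith : (0:ℝ) ≤ p - 1), sub_add_cancel]
        rw [hstep]
        exact mul_div_cancel_left₀ N (Real.rpow_pos_of_pos hpos _).ne'
      have hcoord : N ≤ pNorm q (fun i' => ∑ k, (A i' k * Y i' ω k) * tt k) := by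
        have h2 := abs_le_pNorm (x := fun i' => ∑ k, (A i' k * Y i' ω k) * tt k)
          (by linarith : (0:ℝ) < q) i
        have h3 : (∑ k, (A i k * Y i ω k) * tt k) = N := by
          calc ∑ k, (A i k * Y i ω k) * tt k = ∑ k, v k * tt k :=
                Finset.sum_congr rfl fun k _ => by simp only [hvdef]
          _ = N := hsum
        rw [h3] at h2
        calc N ≤ |N| := le_abs_self N
          _ ≤ _ := h2
      calc N ≤ pNorm q (fun i' => ∑ k, (A i' k * Y i' ω k) * tt k) := hcoord
        _ ≤ opNorm p' q (fun i j => A i j * Y i ω j) :=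
            le_opNorm hp'1 hq1 _ tt htt_norm.le
  -- pointwise max bound
  have hmax_pt : ∀ ω, (⨆ i, ⨆ j, |A i j * Y i ω j|) ≤
      opNorm p' q (fun i j => A i j * Y i ω j) := by
    intro ω
    refine ciSup_le fun i => ciSup_le fun j => ?_
    exact le_trans (abs_le_pNorm hq0 i (x := fun i' => A i' j * Y i' ω j)) (hcol_pt ω j)
  -- row integral bound
  have hrowInt : ∀ i, (1/50) * pNorm p (A i) ≤
      ∫ ω, opNorm p' q (fun i j => A i j * Y i ω j) ∂P := by
    intro i
    rcases eq_or_lt_of_le (pNorm_nonneg (r := p) (x := A i)) with h0 | hpos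
    · rw [← h0, mul_zero]
      exact hOpNonneg
    · set u : Fin n → ℝ := fun j => |A i j| ^ (p-1) / (pNorm p (A i)) ^ (p-1) with hudef
      have hu_nonneg : ∀ j, 0 ≤ u j := by
        intro j
        rw [hudef]
        positivity
      have step1 : ∀ ω, ∑ j, u j * |A i j * Y i ω j| ≤
          opNorm p' q (fun i j => A i j * Y i ω j) :=
        fun ω => le_trans
          (dual_mul_le_pNorm hconjp (A i) (fun j => A i j * Y i ω j) hpos)
          (hrow_pt ω i)
      have step2 : ∫ ω, (∑ j, u j * |A i j * Y i ω j|) ∂P ≤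
          ∫ ω, opNorm p' q (fun i j => A i j * Y i ω j) ∂P := by
        apply integral_mono_of_nonneg ?_ hOpInt (ae_of_all _ step1)
        apply ae_of_all
        intro ω
        exact Finset.sum_nonneg fun j _ => mul_nonneg (hu_nonneg j) (abs_nonneg _)
      have step3 : ∫ ω, (∑ j, u j * |A i j * Y i ω j|) ∂P =
          ∑ j, u j * (|A i j| * ∫ ω, |Y i ω j| ∂P) := by
        rw [integral_finset_sum _ fun j _ => ((hIntAbsX i j).const_mul (u j))]
        refine Finset.sum_congr rfl fun j _ => ?_
        rw [integral_const_mul]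
        congr 1
        have he : (fun ω => |A i j * Y i ω j|) = fun ω => |A i j| * |Y i ω j| :=
          funext fun ω => abs_mul _ _
        rw [he, integral_const_mul]
      have step4 : (1/50) * pNorm p (A i) ≤ ∑ j, u j * (|A i j| * ∫ ω, |Y i ω j| ∂P) := by
        have hterm : ∀ j ∈ Finset.univ, u j * (|A i j| * (1/50)) ≤
            u j * (|A i j| * ∫ ω, |Y i ω j| ∂P) := by
          intro j _
          apply mul_le_mul_of_nonneg_left _ (hu_nonneg j)
          exact mul_le_mul_of_nonneg_left (hEY i j) (abs_nonneg _)
        have hrw : ∑ j, u j * (|A i j| * (1/50)) = (1/50) * pNorm p (A i) := by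
          have := dual_sum_eq_pNorm hp1 (A i) hpos
          calc ∑ j, u j * (|A i j| * (1/50))
              = (1/50) * ∑ j, (|A i j| ^ (p-1) / (pNorm p (A i)) ^ (p-1)) * |A i j| := by
                rw [Finset.mul_sum]
                refine Finset.sum_congr rfl fun j _ => ?_
                rw [hudef]
                ring
            _ = (1/50) * pNorm p (A i) := by rw [this]
        calc (1/50) * pNorm p (A i) = ∑ j, u j * (|A i j| * (1/50)) := hrw.symm
          _ ≤ ∑ j, u j * (|A i j| * ∫ ω, |Y i ω j| ∂P) := Finset.sum_le_sum hterm
      linarith [step2, step3 ▸ step4]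
  -- column integral bound
  have hcolInt : ∀ j, (1/50) * pNorm q (fun i => A i j) ≤
      ∫ ω, opNorm p' q (fun i j => A i j * Y i ω j) ∂P := by
    intro j
    rcases eq_or_lt_of_le (pNorm_nonneg (r := q) (x := fun i => A i j)) with h0 | hpos
    · rw [← h0, mul_zero]
      exact hOpNonneg
    · set u : Fin m → ℝ := fun i => |A i j| ^ (q-1) / (pNorm q (fun i => A i j)) ^ (q-1)
        with hudef
      have hu_nonneg : ∀ i, 0 ≤ u i := by
        intro i
        rw [hudef]
        positivity
      have step1 : ∀ ω, ∑ i, u i * |A i j * Y i ω j| ≤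
          opNorm p' q (fun i j => A i j * Y i ω j) :=
        fun ω => le_trans
          (dual_mul_le_pNorm hconjq (fun i => A i j) (fun i => A i j * Y i ω j) hpos)
          (hcol_pt ω j)
      have step2 : ∫ ω, (∑ i, u i * |A i j * Y i ω j|) ∂P ≤
          ∫ ω, opNorm p' q (fun i j => A i j * Y i ω j) ∂P := by
        apply integral_mono_of_nonneg ?_ hOpInt (ae_of_all _ step1)
        apply ae_of_all
        intro ω
        exact Finset.sum_nonneg fun i _ => mul_nonneg (hu_nonneg i) (abs_nonneg _)
      have step3 : ∫ ω, (∑ i, u i * |A i j * Y i ω j|) ∂P =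
          ∑ i, u i * (|A i j| * ∫ ω, |Y i ω j| ∂P) := by
        rw [integral_finset_sum _ fun i _ => ((hIntAbsX i j).const_mul (u i))]
        refine Finset.sum_congr rfl fun i _ => ?_
        rw [integral_const_mul]
        congr 1
        have he : (fun ω => |A i j * Y i ω j|) = fun ω => |A i j| * |Y i ω j| :=
          funext fun ω => abs_mul _ _
        rw [he, integral_const_mul]
      have step4 : (1/50) * pNorm q (fun i => A i j) ≤
          ∑ i, u i * (|A i j| * ∫ ω, |Y i ω j| ∂P) := by
        have hterm : ∀ i ∈ Finset.univ, u i * (|A i j| * (1/50)) ≤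
            u i * (|A i j| * ∫ ω, |Y i ω j| ∂P) := by
          intro i _
          apply mul_le_mul_of_nonneg_left _ (hu_nonneg i)
          exact mul_le_mul_of_nonneg_left (hEY i j) (abs_nonneg _)
        have hrw : ∑ i, u i * (|A i j| * (1/50)) = (1/50) * pNorm q (fun i => A i j) := by
          have := dual_sum_eq_pNorm (by linarith : 1 < q) (fun i => A i j) hpos
          calc ∑ i, u i * (|A i j| * (1/50))
              = (1/50) * ∑ i, (|A i j| ^ (q-1) / (pNorm q (fun i => A i j)) ^ (q-1))
                  * |A i j| := by
                rw [Finset.mul_sum]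
                refine Finset.sum_congr rfl fun i _ => ?_
                rw [hudef]
                ring
            _ = (1/50) * pNorm q (fun i => A i j) := by rw [this]
        calc (1/50) * pNorm q (fun i => A i j) = ∑ i, u i * (|A i j| * (1/50)) := hrw.symm
          _ ≤ ∑ i, u i * (|A i j| * ∫ ω, |Y i ω j| ∂P) := Finset.sum_le_sum hterm
      linarith [step2, step3 ▸ step4]
  -- max integral bound
  have hmaxInt : ∫ ω, (⨆ i, ⨆ j, |A i j * Y i ω j|) ∂P ≤
      ∫ ω, opNorm p' q (fun i j => A i j * Y i ω j) ∂P := by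
    apply integral_mono_of_nonneg ?_ hOpInt (ae_of_all _ hmax_pt)
    apply ae_of_all
    intro ω
    have hb1 : BddAbove (Set.range fun i => ⨆ j, |A i j * Y i ω j|) :=
      Set.Finite.bddAbove (Set.finite_range _)
    have hb2 : ∀ i, BddAbove (Set.range fun j => |A i j * Y i ω j|) :=
      fun i => Set.Finite.bddAbove (Set.finite_range _)
    obtain ⟨i0⟩ := (inferInstance : Nonempty (Fin m))
    obtain ⟨j0⟩ := (inferInstance : Nonempty (Fin n))
    exact le_ciSup_of_le hb1 i0 (le_ciSup_of_le (hb2 i0) j0 (abs_nonneg _))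
  -- sup bounds
  have hSA : (⨆ i, pNorm p (A i)) ≤
      50 * ∫ ω, opNorm p' q (fun i j => A i j * Y i ω j) ∂P :=
    ciSup_le fun i => by linarith [hrowInt i]
  have hSB : (⨆ j, pNorm q (fun i => A i j)) ≤
      50 * ∫ ω, opNorm p' q (fun i j => A i j * Y i ω j) ∂P :=
    ciSup_le fun j => by linarith [hcolInt j]
  linarith [hSA, hSB, hmaxInt, hOpNonneg]


end
end

section
/- There exists a universal constant C > 0 such that for every log-concave random vector Z in ℝ^n, every t ∈ ℝ^n, and every q ≥ 1, ℙ( |Σ_{i=1}^n t_i Z_i| ≥ (1/2) · (𝔼|Σ_{i=1}^n t_i Z_i|^q)^{1/q} ) ≥ e^{-Cq}. -/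
open MeasureTheory ProbabilityTheory Real
open scoped Pointwise

noncomputable section

private lemma lemA {n : ℕ} {Ω : Type} [MeasurableSpace Ω] (P : Measure Ω) [IsProbabilityMeasure P]
    {Z : Ω → Fin n → ℝ} (hlc : IsLogConcave P Z) {t : Fin n → ℝ} (ht : t ≠ 0)
    (a b : ℝ) {lam : ℝ} (h0 : 0 ≤ lam) (h1 : lam ≤ 1) :
    P {ω | a ≤ ∑ i, t i * Z ω i} ^ lam * P {ω | b ≤ ∑ i, t i * Z ω i} ^ (1 - lam)
      ≤ P {ω | lam * a + (1 - lam) * b ≤ ∑ i, t i * Z ω i} := by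
  obtain ⟨i₀, hi₀⟩ : ∃ i, t i ≠ 0 := by
    by_contra h; push_neg at h; exact ht (funext h)
  have hcont : Continuous (fun x : Fin n → ℝ => ∑ i, t i * x i) :=
    continuous_finset_sum _ fun i _ => continuous_const.mul (continuous_apply i)
  set x₀ : Fin n → ℝ := fun i => if i = i₀ then a / t i₀ else 0 with hx₀def
  set y₀ : Fin n → ℝ := fun i => if i = i₀ then b / t i₀ else 0 with hy₀def
  have hx₀ : ∑ i, t i * x₀ i = a := by
    simp only [hx₀def, mul_ite, mul_zero, Finset.sum_ite_eq', Finset.mem_univ, if_true]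
    field_simp
  have hy₀ : ∑ i, t i * y₀ i = b := by
    simp only [hy₀def, mul_ite, mul_zero, Finset.sum_ite_eq', Finset.mem_univ, if_true]
    field_simp
  set K : ℕ → Set (Fin n → ℝ) :=
    fun N => Metric.closedBall 0 (‖x₀‖ + ‖y₀‖ + N) ∩ {x | a ≤ ∑ i, t i * x i} with hKdef
  set L : ℕ → Set (Fin n → ℝ) :=
    fun N => Metric.closedBall 0 (‖x₀‖ + ‖y₀‖ + N) ∩ {x | b ≤ ∑ i, t i * x i} with hLdef
  have hN0 : ∀ N : ℕ, (0:ℝ) ≤ N := fun N => Nat.cast_nonneg N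
  have hKne : ∀ N, (K N).Nonempty := fun N =>
    ⟨x₀, ⟨by
      simp only [Metric.mem_closedBall, dist_zero_right]
      have h1 := norm_nonneg y₀; have h2 := hN0 N; linarith,
      le_of_eq hx₀.symm⟩⟩
  have hLne : ∀ N, (L N).Nonempty := fun N =>
    ⟨y₀, ⟨by
      simp only [Metric.mem_closedBall, dist_zero_right]
      have h1 := norm_nonneg x₀; have h2 := hN0 N; linarith,
      le_of_eq hy₀.symm⟩⟩
  have hKcp : ∀ N, IsCompact (K N) := fun N =>
    (isCompact_closedBall _ _).inter_right (isClosed_le continuous_const hcont)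
  have hLcp : ∀ N, IsCompact (L N) := fun N =>
    (isCompact_closedBall _ _).inter_right (isClosed_le continuous_const hcont)
  -- the combination is contained in the halfspace
  have hsub : ∀ N, lam • K N + (1 - lam) • L N ⊆
      {x : Fin n → ℝ | lam * a + (1 - lam) * b ≤ ∑ i, t i * x i} := by
    intro N z hz
    rw [Set.mem_add] at hz
    obtain ⟨u, hu, v, hv, rfl⟩ := hz
    obtain ⟨x, hx, rfl⟩ := hu
    obtain ⟨y, hy, rfl⟩ := hv
    have hxa : a ≤ ∑ i, t i * x i := hx.2
    have hyb : b ≤ ∑ i, t i * y i := hy.2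
    have hsum : ∑ i, t i * (lam • x + (1 - lam) • y) i
        = lam * (∑ i, t i * x i) + (1 - lam) * (∑ i, t i * y i) := by
      rw [Finset.mul_sum, Finset.mul_sum, ← Finset.sum_add_distrib]
      refine Finset.sum_congr rfl fun i _ => ?_
      simp [Pi.add_apply, Pi.smul_apply, smul_eq_mul]; ring
    simp only [Set.mem_setOf_eq, hsum]
    have h1lam : 0 ≤ 1 - lam := by linarith
    exact add_le_add (mul_le_mul_of_nonneg_left hxa h0) (mul_le_mul_of_nonneg_left hyb h1lam)
  -- single step inequality
  have hstep : ∀ N : ℕ, P {ω | Z ω ∈ K N} ^ lam * P {ω | Z ω ∈ L N} ^ (1 - lam)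
      ≤ P {ω | lam * a + (1 - lam) * b ≤ ∑ i, t i * Z ω i} := by
    intro N
    refine le_trans (hlc (K N) (L N) (hKne N) (hLne N) (hKcp N) (hLcp N) lam ⟨h0, h1⟩) ?_
    exact measure_mono fun ω hω => hsub N hω
  -- monotone unions
  have hKmono : Monotone fun N : ℕ => {ω | Z ω ∈ K N} := by
    intro N M hNM ω hω
    refine ⟨Metric.closedBall_subset_closedBall ?_ hω.1, hω.2⟩
    have : (N:ℝ) ≤ M := Nat.cast_le.mpr hNM
    linarith
  have hLmono : Monotone fun N : ℕ => {ω | Z ω ∈ L N} := by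
    intro N M hNM ω hω
    refine ⟨Metric.closedBall_subset_closedBall ?_ hω.1, hω.2⟩
    have : (N:ℝ) ≤ M := Nat.cast_le.mpr hNM
    linarith
  have hKUn : (⋃ N : ℕ, {ω | Z ω ∈ K N}) = {ω | a ≤ ∑ i, t i * Z ω i} := by
    ext ω
    simp only [Set.mem_iUnion, Set.mem_setOf_eq]
    constructor
    · rintro ⟨N, hN⟩; exact hN.2
    · intro hω
      obtain ⟨N, hN⟩ := exists_nat_ge ‖Z ω‖
      refine ⟨N, ⟨?_, hω⟩⟩
      simp only [Metric.mem_closedBall, dist_zero_right]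
      have h1 := norm_nonneg x₀; have h2 := norm_nonneg y₀; linarith
  have hLUn : (⋃ N : ℕ, {ω | Z ω ∈ L N}) = {ω | b ≤ ∑ i, t i * Z ω i} := by
    ext ω
    simp only [Set.mem_iUnion, Set.mem_setOf_eq]
    constructor
    · rintro ⟨N, hN⟩; exact hN.2
    · intro hω
      obtain ⟨N, hN⟩ := exists_nat_ge ‖Z ω‖
      refine ⟨N, ⟨?_, hω⟩⟩
      simp only [Metric.mem_closedBall, dist_zero_right]
      have h1 := norm_nonneg x₀; have h2 := norm_nonneg y₀; linarith
  have htendK : Filter.Tendsto (fun N => P {ω | Z ω ∈ K N}) Filter.atTop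
      (nhds (P {ω | a ≤ ∑ i, t i * Z ω i})) := by
    have := tendsto_measure_iUnion_atTop (μ := P) hKmono
    rwa [hKUn] at this
  have htendL : Filter.Tendsto (fun N => P {ω | Z ω ∈ L N}) Filter.atTop
      (nhds (P {ω | b ≤ ∑ i, t i * Z ω i})) := by
    have := tendsto_measure_iUnion_atTop (μ := P) hLmono
    rwa [hLUn] at this
  have htendKr : Filter.Tendsto (fun N => P {ω | Z ω ∈ K N} ^ lam) Filter.atTop
      (nhds (P {ω | a ≤ ∑ i, t i * Z ω i} ^ lam)) :=
    (ENNReal.continuous_rpow_const.tendsto _).comp htendK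
  have htendLr : Filter.Tendsto (fun N => P {ω | Z ω ∈ L N} ^ (1 - lam)) Filter.atTop
      (nhds (P {ω | b ≤ ∑ i, t i * Z ω i} ^ (1 - lam))) :=
    (ENNReal.continuous_rpow_const.tendsto _).comp htendL
  have hne1 : P {ω | a ≤ ∑ i, t i * Z ω i} ^ lam ≠ ⊤ :=
    ENNReal.rpow_ne_top_of_nonneg h0 (measure_ne_top P _)
  have hne2 : P {ω | b ≤ ∑ i, t i * Z ω i} ^ (1 - lam) ≠ ⊤ :=
    ENNReal.rpow_ne_top_of_nonneg (by linarith) (measure_ne_top P _)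
  have hmul := ENNReal.Tendsto.mul htendKr (Or.inr hne2) htendLr (Or.inr hne1)
  exact le_of_tendsto hmul (Filter.Eventually.of_forall hstep)

private lemma lemB {g : ℝ → ENNReal}
    (hc : ∀ a b lam : ℝ, 0 ≤ lam → lam ≤ 1 → g a ^ lam * g b ^ (1 - lam) ≤ g (lam*a+(1-lam)*b))
    {M : ℝ} (hbase : (1:ENNReal)/2 ≤ g (-(M/2))) (k : ℕ) :
    g (((k:ℝ)+1) * (M/2)) ≤ (2 * g (M/2)) ^ (((k:ℝ)+2)/2) := by
  set kr : ℝ := (k:ℝ) with hkr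
  have hk0 : (0:ℝ) ≤ kr := Nat.cast_nonneg k
  have hk2 : (0:ℝ) < kr + 2 := by linarith
  set lam : ℝ := kr / (kr + 2) with hlam
  have h0 : 0 ≤ lam := div_nonneg hk0 hk2.le
  have h1 : lam ≤ 1 := by rw [hlam, div_le_one hk2]; linarith
  have hcomb : lam * (-(M/2)) + (1-lam) * ((kr+1) * (M/2)) = M/2 := by
    rw [hlam]; field_simp; ring
  have hmain := hc (-(M/2)) ((kr+1) * (M/2)) lam h0 h1
  rw [hcomb] at hmain
  -- lower bound the first factor
  have hhalf : (1:ENNReal)/2 ≤ g (-(M/2)) ^ lam := by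
    calc (1:ENNReal)/2 = ((1:ENNReal)/2) ^ (1:ℝ) := by rw [ENNReal.rpow_one]
    _ ≤ ((1:ENNReal)/2) ^ lam := ENNReal.rpow_le_rpow_of_exponent_ge (by norm_num) h1
    _ ≤ g (-(M/2)) ^ lam := ENNReal.rpow_le_rpow hbase h0
  have h2 : (1:ENNReal)/2 * g ((kr+1) * (M/2)) ^ (1-lam) ≤ g (M/2) :=
    le_trans (mul_le_mul_left hhalf _) hmain
  have h3 : g ((kr+1) * (M/2)) ^ (1-lam) ≤ 2 * g (M/2) := by
    have := mul_le_mul_right h2 2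
    rw [← mul_assoc, mul_one_div] at this
    rw [ENNReal.div_self (by norm_num) (by norm_num), one_mul] at this
    exact this
  have hth : 0 < 1 - lam := by
    rw [hlam]
    have : kr / (kr + 2) < 1 := by rw [div_lt_one hk2]; linarith
    linarith
  calc g ((kr+1) * (M/2)) = (g ((kr+1) * (M/2)) ^ (1-lam)) ^ (1/(1-lam)) := by
        rw [← ENNReal.rpow_mul, mul_one_div, div_self hth.ne', ENNReal.rpow_one]
    _ ≤ (2 * g (M/2)) ^ (1/(1-lam)) := ENNReal.rpow_le_rpow h3 (by positivity)
    _ = (2 * g (M/2)) ^ ((kr+2)/2) := by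
        congr 1
        rw [hlam]
        field_simp
        ring

private lemma lemC {q M : ℝ} (hq : 1 ≤ q) (hM : 0 < M) (k : ℕ) :
    ((((k:ℝ)+2)*(M/2)) ^ q) * (2 * (2*exp (-10*q)) ^ (((k:ℝ)+2)/2))
      ≤ 2 * M ^ q * exp (-9) * exp (-4) ^ k := by
  have hq0 : (0:ℝ) ≤ q := by linarith
  have hk0 : (0:ℝ) ≤ (k:ℝ) := Nat.cast_nonneg k
  have he : (0:ℝ) ≤ ((k:ℝ)+2)/2 := by positivity
  have h2e : (2:ℝ) ≤ exp 1 := by have := add_one_le_exp (1:ℝ); linarith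
  -- bound the first factor
  have hc1 : (((k:ℝ)+2)*(M/2)) ^ q ≤ exp ((k:ℝ)/2 * q) * M ^ q := by
    rw [show ((k:ℝ)+2)*(M/2) = (((k:ℝ)+2)/2) * M by ring,
      Real.mul_rpow (by positivity) hM.le]
    have h1 : ((k:ℝ)+2)/2 ≤ exp ((k:ℝ)/2) := by
      have := add_one_le_exp ((k:ℝ)/2); linarith
    have := Real.rpow_le_rpow (by positivity) h1 hq0
    rw [← Real.exp_mul] at this
    exact mul_le_mul_of_nonneg_right this (by positivity)
  -- bound the second factor
  have hc2 : (2*exp (-10*q)) ^ (((k:ℝ)+2)/2)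
      ≤ exp (((k:ℝ)+2)/2) * exp (-10*q*(((k:ℝ)+2)/2)) := by
    rw [Real.mul_rpow (by norm_num) (exp_nonneg _), ← Real.exp_mul]
    refine mul_le_mul_of_nonneg_right ?_ (exp_nonneg _)
    calc (2:ℝ) ^ (((k:ℝ)+2)/2) ≤ exp 1 ^ (((k:ℝ)+2)/2) :=
          Real.rpow_le_rpow (by norm_num) h2e he
      _ = exp (((k:ℝ)+2)/2) := Real.exp_one_rpow _
  have hMq : (0:ℝ) < M ^ q := Real.rpow_pos_of_pos hM q
  calc ((((k:ℝ)+2)*(M/2)) ^ q) * (2 * (2*exp (-10*q)) ^ (((k:ℝ)+2)/2))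
      ≤ (exp ((k:ℝ)/2 * q) * M ^ q) * (2 * (exp (((k:ℝ)+2)/2) * exp (-10*q*(((k:ℝ)+2)/2)))) := by
        refine mul_le_mul hc1 ?_ (by positivity) (by positivity)
        exact mul_le_mul_of_nonneg_left hc2 (by norm_num)
    _ = 2 * M ^ q * exp ((k:ℝ)/2 * q + ((k:ℝ)+2)/2 + (-10*q*(((k:ℝ)+2)/2))) := by
        rw [Real.exp_add, Real.exp_add]; ring
    _ ≤ 2 * M ^ q * exp (-9 + (k:ℝ)*(-4)) := by
        refine mul_le_mul_of_nonneg_left (Real.exp_le_exp.mpr ?_) (by positivity)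
        nlinarith [mul_nonneg (sub_nonneg.mpr hq) (by positivity : (0:ℝ) ≤ 9*(k:ℝ)/2+10)]
    _ = 2 * M ^ q * exp (-9) * exp (-4) ^ k := by
        rw [Real.exp_add, Real.exp_nat_mul]; ring

theorem statement7 :
    ∃ C : ℝ, 0 < C ∧
      ∀ (n : ℕ) (Ω : Type) [MeasurableSpace Ω] (P : Measure Ω), IsProbabilityMeasure P →
      ∀ Z : Ω → Fin n → ℝ, Measurable Z → IsLogConcave P Z →
      ∀ (t : Fin n → ℝ) (q : ℝ), 1 ≤ q →
        ENNReal.ofReal (Real.exp (-C * q)) ≤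
          P {ω | (1 / 2) * (∫ ω', |∑ i, t i * Z ω' i| ^ q ∂P) ^ (1 / q)
              ≤ |∑ i, t i * Z ω i|} := by
  refine ⟨10, by norm_num, ?_⟩
  intro n Ω _ P hP Z hZ hlc t q hq
  haveI := hP
  have hq0 : (0:ℝ) < q := lt_of_lt_of_le one_pos hq
  have hq0' : (0:ℝ) ≤ q := hq0.le
  have hexp1 : Real.exp (-10 * q) ≤ 1 := exp_le_one_iff.mpr (by nlinarith)
  have htriv : ∀ s : Set Ω, s = Set.univ → ENNReal.ofReal (Real.exp (-10*q)) ≤ P s := by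
    intro s hs
    rw [hs, measure_univ]
    exact ENNReal.ofReal_le_one.mpr hexp1
  show ENNReal.ofReal (Real.exp (-10 * q)) ≤ _
  by_cases ht : t = 0
  · apply htriv
    rw [Set.eq_univ_iff_forall]
    intro ω
    simp only [Set.mem_setOf_eq, ht, Pi.zero_apply, zero_mul, Finset.sum_const_zero, abs_zero,
      Real.zero_rpow hq0.ne', integral_zero,
      Real.zero_rpow (one_div_ne_zero hq0.ne'), mul_zero, le_refl]
  by_cases hInt : Integrable (fun ω' => |∑ i, t i * Z ω' i| ^ q) P
  swap
  · rw [integral_undef hInt, Real.zero_rpow (one_div_ne_zero hq0.ne'), mul_zero]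
    apply htriv
    rw [Set.eq_univ_iff_forall]
    intro ω
    simp only [Set.mem_setOf_eq]
    exact abs_nonneg _
  set I : ℝ := ∫ ω', |∑ i, t i * Z ω' i| ^ q ∂P with hIdef
  have hI0 : 0 ≤ I := integral_nonneg fun ω => by positivity
  rcases eq_or_lt_of_le hI0 with hI | hI
  · rw [← hI, Real.zero_rpow (one_div_ne_zero hq0.ne'), mul_zero]
    apply htriv
    rw [Set.eq_univ_iff_forall]
    intro ω
    simp only [Set.mem_setOf_eq]
    exact abs_nonneg _
  -- main case
  set M : ℝ := I ^ (1/q) with hMdef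
  have hM : 0 < M := Real.rpow_pos_of_pos hI _
  have hMq : M ^ q = I := by
    rw [hMdef, ← Real.rpow_mul hI.le, one_div_mul_cancel hq0.ne', Real.rpow_one]
  set S : ℕ → Set Ω := fun k => {ω | ((k:ℝ)+1) * (M/2) ≤ |∑ i, t i * Z ω i|} with hSdef
  have hgoal : {ω | 1/2 * M ≤ |∑ i, t i * Z ω i|} = S 0 := by
    ext ω
    rw [hSdef]
    simp only [Set.mem_setOf_eq, Nat.cast_zero]
    constructor <;> intro h <;> linarith
  rw [hgoal]
  -- measurability
  have hXm : Measurable fun ω => ∑ i, t i * Z ω i :=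
    Finset.measurable_sum _ fun i _ => measurable_const.mul ((measurable_pi_apply i).comp hZ)
  have hSmeas : ∀ k, MeasurableSet (S k) := by
    intro k
    rw [hSdef]
    exact measurableSet_le measurable_const hXm.abs
  by_contra hcon
  push_neg at hcon
  set p : ENNReal := P (S 0) with hpdef
  have hp : p < ENNReal.ofReal (exp (-10*q)) := hcon
  have h2e : (2:ℝ) ≤ exp 1 := by have := add_one_le_exp (1:ℝ); linarith
  have hhalfreal : exp (-10*q) ≤ 1/2 := by
    have h2 : (2:ℝ) ≤ exp (10*q) := by
      have := add_one_le_exp (10*q); nlinarith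
    rw [show (-10)*q = -(10*q) by ring, Real.exp_neg, one_div]
    exact inv_anti₀ two_pos h2
  have hp2 : p ≤ (1:ENNReal)/2 := by
    refine hp.le.trans (le_trans (ENNReal.ofReal_le_ofReal hhalfreal) ?_)
    rw [ENNReal.ofReal_div_of_pos two_pos, ENNReal.ofReal_one, ENNReal.ofReal_ofNat]
  have hcompl : (1:ENNReal)/2 ≤ P ((S 0)ᶜ) := by
    rw [prob_compl_eq_one_sub (hSmeas 0)]
    refine ENNReal.le_sub_of_add_le_left (by simp) ?_
    calc p + 1/2 ≤ 1/2 + 1/2 := add_le_add hp2 le_rfl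
      _ = 1 := ENNReal.add_halves 1
  -- one-sided tail functions
  have hneg : ∀ ω, ∑ i, (-t) i * Z ω i = -∑ i, t i * Z ω i := by
    intro ω
    rw [← Finset.sum_neg_distrib]
    exact Finset.sum_congr rfl fun i _ => by simp [neg_mul]
  have hcp : ∀ a b lam : ℝ, 0 ≤ lam → lam ≤ 1 →
      P {ω | a ≤ ∑ i, t i * Z ω i} ^ lam * P {ω | b ≤ ∑ i, t i * Z ω i} ^ (1-lam)
        ≤ P {ω | lam*a+(1-lam)*b ≤ ∑ i, t i * Z ω i} :=
    fun a b lam h0 h1 => lemA P hlc ht a b h0 h1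
  have hcm : ∀ a b lam : ℝ, 0 ≤ lam → lam ≤ 1 →
      P {ω | a ≤ ∑ i, (-t) i * Z ω i} ^ lam * P {ω | b ≤ ∑ i, (-t) i * Z ω i} ^ (1-lam)
        ≤ P {ω | lam*a+(1-lam)*b ≤ ∑ i, (-t) i * Z ω i} :=
    fun a b lam h0 h1 => lemA P hlc (neg_ne_zero.mpr ht) a b h0 h1
  have hbasep : (1:ENNReal)/2 ≤ P {ω | -(M/2) ≤ ∑ i, t i * Z ω i} := by
    refine le_trans hcompl (measure_mono ?_)
    intro ω hω
    simp only [hSdef, Set.mem_compl_iff, Set.mem_setOf_eq, not_le, Nat.cast_zero, zero_add,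
      one_mul] at hω
    simp only [Set.mem_setOf_eq]
    have := (abs_lt.mp hω).1
    linarith
  have hbasem : (1:ENNReal)/2 ≤ P {ω | -(M/2) ≤ ∑ i, (-t) i * Z ω i} := by
    refine le_trans hcompl (measure_mono ?_)
    intro ω hω
    simp only [hSdef, Set.mem_compl_iff, Set.mem_setOf_eq, not_le, Nat.cast_zero, zero_add,
      one_mul] at hω
    simp only [Set.mem_setOf_eq, hneg ω]
    have := (abs_lt.mp hω).2
    linarith
  have htopp : P {ω | M/2 ≤ ∑ i, t i * Z ω i} ≤ p := by
    refine measure_mono ?_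
    intro ω hω
    simp only [Set.mem_setOf_eq] at hω
    simp only [hSdef, Set.mem_setOf_eq, Nat.cast_zero]
    have := le_abs_self (∑ i, t i * Z ω i)
    linarith
  have htopm : P {ω | M/2 ≤ ∑ i, (-t) i * Z ω i} ≤ p := by
    refine measure_mono ?_
    intro ω hω
    simp only [Set.mem_setOf_eq, hneg ω] at hω
    simp only [hSdef, Set.mem_setOf_eq, Nat.cast_zero]
    have := neg_le_abs (∑ i, t i * Z ω i)
    linarith
  have hgbp : ∀ k : ℕ, P {ω | ((k:ℝ)+1)*(M/2) ≤ ∑ i, t i * Z ω i}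
      ≤ (2*p) ^ (((k:ℝ)+2)/2) := by
    intro k
    refine le_trans (lemB hcp hbasep k) ?_
    exact ENNReal.rpow_le_rpow (mul_le_mul_right htopp 2) (by positivity)
  have hgbm : ∀ k : ℕ, P {ω | ((k:ℝ)+1)*(M/2) ≤ ∑ i, (-t) i * Z ω i}
      ≤ (2*p) ^ (((k:ℝ)+2)/2) := by
    intro k
    refine le_trans (lemB hcm hbasem k) ?_
    exact ENNReal.rpow_le_rpow (mul_le_mul_right htopm 2) (by positivity)
  have hT : ∀ k : ℕ, P (S k) ≤ 2 * (2*p) ^ (((k:ℝ)+2)/2) := by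
    intro k
    have hsub : S k ⊆ {ω | ((k:ℝ)+1)*(M/2) ≤ ∑ i, t i * Z ω i}
        ∪ {ω | ((k:ℝ)+1)*(M/2) ≤ ∑ i, (-t) i * Z ω i} := by
      intro ω hω
      simp only [hSdef, Set.mem_setOf_eq] at hω
      rw [Set.mem_union]
      rcases le_abs.mp hω with h | h
      · left; exact h
      · right
        simp only [Set.mem_setOf_eq, hneg ω]
        exact h
    calc P (S k) ≤ P ({ω | ((k:ℝ)+1)*(M/2) ≤ ∑ i, t i * Z ω i}
          ∪ {ω | ((k:ℝ)+1)*(M/2) ≤ ∑ i, (-t) i * Z ω i}) := measure_mono hsub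
      _ ≤ P {ω | ((k:ℝ)+1)*(M/2) ≤ ∑ i, t i * Z ω i}
          + P {ω | ((k:ℝ)+1)*(M/2) ≤ ∑ i, (-t) i * Z ω i} := measure_union_le _ _
      _ ≤ (2*p) ^ (((k:ℝ)+2)/2) + (2*p) ^ (((k:ℝ)+2)/2) := add_le_add (hgbp k) (hgbm k)
      _ = 2 * (2*p) ^ (((k:ℝ)+2)/2) := (two_mul _).symm
  -- pointwise layer bound
  have hpt : ∀ ω, ENNReal.ofReal (|∑ i, t i * Z ω i| ^ q)
      ≤ ENNReal.ofReal ((M/2)^q)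
        + ∑' k : ℕ, (S k).indicator (fun _ => ENNReal.ofReal ((((k:ℝ)+2)*(M/2))^q)) ω := by
    intro ω
    have hx0 : 0 ≤ |∑ i, t i * Z ω i| := abs_nonneg _
    rcases lt_or_ge |∑ i, t i * Z ω i| (M/2) with hlt | hge
    · refine le_trans ?_ le_self_add
      exact ENNReal.ofReal_le_ofReal (Real.rpow_le_rpow hx0 hlt.le hq0')
    · have hM2 : 0 < M/2 := by linarith
      set x : ℝ := |∑ i, t i * Z ω i| with hxdef
      set j : ℕ := ⌊x / (M/2)⌋₊ with hjdef
      have hj1 : 1 ≤ j := by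
        rw [hjdef]
        refine Nat.le_floor ?_
        rw [Nat.cast_one, le_div_iff₀ hM2]
        linarith
      have hlow : (j:ℝ) * (M/2) ≤ x := by
        have h := Nat.floor_le (show (0:ℝ) ≤ x/(M/2) by positivity)
        rw [← hjdef] at h
        calc (j:ℝ) * (M/2) ≤ (x/(M/2)) * (M/2) := by
              exact mul_le_mul_of_nonneg_right h hM2.le
          _ = x := by field_simp
      have hup : x < ((j:ℝ)+1) * (M/2) := by
        have h := Nat.lt_floor_add_one (x/(M/2))
        rw [← hjdef] at h
        calc x = (x/(M/2)) * (M/2) := by field_simp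
          _ < ((j:ℝ)+1) * (M/2) := by
              exact mul_lt_mul_of_pos_right h hM2
      set k : ℕ := j - 1 with hkdef
      have hkj : (k:ℝ) + 1 = (j:ℝ) := by
        have hn : k + 1 = j := by omega
        exact_mod_cast congrArg (Nat.cast : ℕ → ℝ) hn
      have hωS : ω ∈ S k := by
        simp only [hSdef, Set.mem_setOf_eq]
        rw [hkj]
        exact hlow
      calc ENNReal.ofReal (x ^ q)
          ≤ (S k).indicator (fun _ => ENNReal.ofReal ((((k:ℝ)+2)*(M/2))^q)) ω := by
            rw [Set.indicator_of_mem hωS]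
            refine ENNReal.ofReal_le_ofReal (Real.rpow_le_rpow hx0 ?_ hq0')
            have h22 : (k:ℝ)+2 = (j:ℝ)+1 := by rw [← hkj]; ring
            rw [h22]
            exact hup.le
        _ ≤ ∑' k' : ℕ, (S k').indicator (fun _ => ENNReal.ofReal ((((k':ℝ)+2)*(M/2))^q)) ω :=
            ENNReal.le_tsum k
        _ ≤ _ := le_add_self
  -- integrated bound
  have hJle : ∫⁻ ω, ENNReal.ofReal (|∑ i, t i * Z ω i| ^ q) ∂P
      ≤ ENNReal.ofReal ((M/2)^q)
        + ∑' k : ℕ, ENNReal.ofReal ((((k:ℝ)+2)*(M/2))^q) * P (S k) := by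
    calc ∫⁻ ω, ENNReal.ofReal (|∑ i, t i * Z ω i| ^ q) ∂P
        ≤ ∫⁻ ω, (ENNReal.ofReal ((M/2)^q)
            + ∑' k : ℕ, (S k).indicator (fun _ => ENNReal.ofReal ((((k:ℝ)+2)*(M/2))^q)) ω) ∂P :=
          lintegral_mono hpt
      _ = ENNReal.ofReal ((M/2)^q)
            + ∫⁻ ω, ∑' k : ℕ, (S k).indicator
                (fun _ => ENNReal.ofReal ((((k:ℝ)+2)*(M/2))^q)) ω ∂P := by
          rw [lintegral_add_left measurable_const, lintegral_const, measure_univ, mul_one]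
      _ = ENNReal.ofReal ((M/2)^q)
            + ∑' k : ℕ, ∫⁻ ω, (S k).indicator
                (fun _ => ENNReal.ofReal ((((k:ℝ)+2)*(M/2))^q)) ω ∂P := by
          rw [lintegral_tsum fun k => (measurable_const.indicator (hSmeas k)).aemeasurable]
      _ = _ := by
          congr 1
          refine tsum_congr fun k => ?_
          rw [lintegral_indicator_const (hSmeas k)]
  have hJeq : ENNReal.ofReal I = ∫⁻ ω, ENNReal.ofReal (|∑ i, t i * Z ω i| ^ q) ∂P := by
    rw [hIdef]
    exact ofReal_integral_eq_lintegral_ofReal hInt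
      (Filter.Eventually.of_forall fun ω => by positivity)
  -- term bound
  have hε : (0:ℝ) < 2*exp (-10*q) := by positivity
  have hp2ε : 2*p ≤ ENNReal.ofReal (2*exp (-10*q)) := by
    calc 2*p ≤ 2 * ENNReal.ofReal (exp (-10*q)) := mul_le_mul_right hp.le 2
      _ = ENNReal.ofReal (2*exp (-10*q)) := by
          rw [ENNReal.ofReal_mul (by norm_num : (0:ℝ) ≤ 2), ENNReal.ofReal_ofNat]
  have hterm : ∀ k : ℕ, ENNReal.ofReal ((((k:ℝ)+2)*(M/2))^q) * P (S k)
      ≤ ENNReal.ofReal (2*M^q*exp (-9) * exp (-4)^k) := by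
    intro k
    calc ENNReal.ofReal ((((k:ℝ)+2)*(M/2))^q) * P (S k)
        ≤ ENNReal.ofReal ((((k:ℝ)+2)*(M/2))^q) * (2 * (2*p) ^ (((k:ℝ)+2)/2)) :=
          mul_le_mul_right (hT k) _
      _ ≤ ENNReal.ofReal ((((k:ℝ)+2)*(M/2))^q)
            * (2 * ENNReal.ofReal ((2*exp (-10*q)) ^ (((k:ℝ)+2)/2))) := by
          refine mul_le_mul_right (mul_le_mul_right ?_ 2) _
          rw [← ENNReal.ofReal_rpow_of_pos hε]
          exact ENNReal.rpow_le_rpow hp2ε (by positivity)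
      _ = ENNReal.ofReal (((((k:ℝ)+2)*(M/2))^q) * (2 * (2*exp (-10*q)) ^ (((k:ℝ)+2)/2))) := by
          rw [ENNReal.ofReal_mul (by positivity), ENNReal.ofReal_mul (by norm_num : (0:ℝ) ≤ 2),
            ENNReal.ofReal_ofNat]
      _ ≤ _ := ENNReal.ofReal_le_ofReal (lemC hq hM k)
  have hlt1 : exp (-4:ℝ) < 1 := exp_lt_one_iff.mpr (by norm_num)
  have hsummable : Summable (fun k : ℕ => 2*M^q*exp (-9) * exp (-4)^k) :=
    (summable_geometric_of_lt_one (exp_nonneg _) hlt1).mul_left _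
  have hsum : ∑' k : ℕ, ENNReal.ofReal (2*M^q*exp (-9) * exp (-4)^k)
      = ENNReal.ofReal (2*M^q*exp (-9) * (1 - exp (-4))⁻¹) := by
    rw [← ENNReal.ofReal_tsum_of_nonneg (fun k => by positivity) hsummable]
    congr 1
    rw [tsum_mul_left, tsum_geometric_of_lt_one (exp_nonneg _) hlt1]
  have hchain : ENNReal.ofReal (M^q)
      ≤ ENNReal.ofReal ((M/2)^q + 2*M^q*exp (-9) * (1 - exp (-4))⁻¹) := by
    calc ENNReal.ofReal (M^q) = ENNReal.ofReal I := by rw [hMq]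
      _ = ∫⁻ ω, ENNReal.ofReal (|∑ i, t i * Z ω i| ^ q) ∂P := hJeq
      _ ≤ ENNReal.ofReal ((M/2)^q)
            + ∑' k : ℕ, ENNReal.ofReal ((((k:ℝ)+2)*(M/2))^q) * P (S k) := hJle
      _ ≤ ENNReal.ofReal ((M/2)^q)
            + ∑' k : ℕ, ENNReal.ofReal (2*M^q*exp (-9) * exp (-4)^k) :=
          add_le_add (le_refl _) (ENNReal.tsum_le_tsum hterm)
      _ = ENNReal.ofReal ((M/2)^q) + ENNReal.ofReal (2*M^q*exp (-9) * (1 - exp (-4))⁻¹) := by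
          rw [hsum]
      _ = _ := by
          rw [← ENNReal.ofReal_add (by positivity)
            (mul_nonneg (by positivity) (inv_nonneg.mpr (by linarith)))]
  have hreal : M^q ≤ (M/2)^q + 2*M^q*exp (-9) * (1 - exp (-4))⁻¹ := by
    refine (ENNReal.ofReal_le_ofReal_iff (add_nonneg (by positivity) ?_)).mp hchain
    exact mul_nonneg (by positivity) (inv_nonneg.mpr (by linarith))
  -- numeric contradiction
  have hMqpos : 0 < M^q := Real.rpow_pos_of_pos hM q
  have hhalfpow : (M/2)^q ≤ M^q/2 := by
    rw [Real.div_rpow hM.le (by norm_num : (0:ℝ) ≤ 2)]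
    have h2q : (2:ℝ) ≤ 2^q := by
      calc (2:ℝ) = 2^(1:ℝ) := (Real.rpow_one 2).symm
        _ ≤ 2^q := Real.rpow_le_rpow_of_exponent_le (by norm_num) hq
    exact div_le_div_of_nonneg_left hMqpos.le two_pos h2q
  have he9 : exp (-9:ℝ) ≤ 1/512 := by
    have hpow : (2:ℝ)^(9:ℕ) ≤ exp 1 ^ (9:ℕ) := pow_le_pow_left₀ (by norm_num) h2e 9
    rw [Real.exp_one_pow] at hpow
    norm_num at hpow
    rw [Real.exp_neg, one_div]
    exact inv_anti₀ (by norm_num) hpow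
  have he4 : exp (-4:ℝ) ≤ 1/16 := by
    have hpow : (2:ℝ)^(4:ℕ) ≤ exp 1 ^ (4:ℕ) := pow_le_pow_left₀ (by norm_num) h2e 4
    rw [Real.exp_one_pow] at hpow
    norm_num at hpow
    rw [Real.exp_neg, one_div]
    exact inv_anti₀ (by norm_num) hpow
  have hgeom : 2*exp (-9:ℝ) * (1 - exp (-4))⁻¹ < 1/2 := by
    have h1 : (0:ℝ) < 1 - exp (-4) := by linarith
    have h2 : (1 - exp (-4:ℝ))⁻¹ ≤ (15/16:ℝ)⁻¹ := by
      apply inv_anti₀ (by norm_num)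
      linarith
    have h3 : (0:ℝ) < exp (-9) := exp_pos _
    nlinarith
  nlinarith [mul_pos hMqpos (sub_pos.mpr hgeom)]

end
end

section
/- Let m ≥ 2, n ≥ 1, γ > 0, and p ≥ max(1, 1/γ). Let B = (B_{ij}) be a deterministic m×n real matrix and let Z = (Z_{ij}) be an m×n random matrix such that each row Z_i = (Z_{ij})_{j≤n} is an isotropic log-concave random vector in ℝ^n. Then there exists a constant C > 0 depending only on p and γ such that 𝔼 max_{i≤m} ( Σ_{j=1}^n |B_{ij}|^p · |Z_{ij}|^{pγ} )^{1/p} ≤ C · (log m)^γ · max_{i≤m} (Σ_{j=1}^n |B_{ij}|^p)^{1/p}. -/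
open MeasureTheory ProbabilityTheory Real
open scoped Pointwise

noncomputable section

open scoped ENNReal

def LC1 {Ω : Type*} [MeasurableSpace Ω] (P : Measure Ω) (X : Ω → ℝ) : Prop :=
  ∀ K L : Set ℝ, K.Nonempty → L.Nonempty → IsCompact K → IsCompact L →
    ∀ lam : ℝ, lam ∈ Set.Icc (0 : ℝ) 1 →
      P {ω | X ω ∈ K} ^ lam * P {ω | X ω ∈ L} ^ (1 - lam) ≤
        P {ω | X ω ∈ lam • K + (1 - lam) • L}

lemma iSup_rpow_nat {a : ℕ → ℝ≥0∞} {e : ℝ} (he : 0 ≤ e) :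
    (⨆ n, a n) ^ e = ⨆ n, a n ^ e := by
  rcases eq_or_lt_of_le he with h0 | hpos
  · simp [← h0, ENNReal.rpow_zero]
  · refine le_antisymm ?_ (iSup_le fun n => ENNReal.rpow_le_rpow (le_iSup a n) he)
    have key : (⨆ n, a n) ≤ (⨆ n, a n ^ e) ^ (1/e) := by
      refine iSup_le fun n => ?_
      have : a n = (a n ^ e) ^ (1/e) := by
        rw [← ENNReal.rpow_mul, mul_one_div_cancel hpos.ne', ENNReal.rpow_one]
      rw [this]
      exact ENNReal.rpow_le_rpow (le_iSup (fun n => a n ^ e) n) (by positivity)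
    calc (⨆ n, a n) ^ e ≤ ((⨆ n, a n ^ e) ^ (1/e)) ^ e := ENNReal.rpow_le_rpow key he
      _ = ⨆ n, a n ^ e := by
        rw [← ENNReal.rpow_mul, one_div_mul_cancel hpos.ne', ENNReal.rpow_one]

lemma lc_marginal {Ω : Type*} [MeasurableSpace Ω] {n : ℕ} (P : Measure Ω)
    (Z : Ω → Fin n → ℝ) (h : IsLogConcave P Z) (j : Fin n) :
    LC1 P (fun ω => Z ω j) := by
  classical
  intro K L hKne hLne hKc hLc lam hlam
  set cyl : Set ℝ → ℕ → Set (Fin n → ℝ) := fun K R =>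
    Set.univ.pi (fun k => if k = j then K else Set.Icc (-(R:ℝ)) R) with hcyl
  have hcompact : ∀ (M : Set ℝ), IsCompact M → ∀ R, IsCompact (cyl M R) := by
    intro M hM R
    exact isCompact_univ_pi fun k => by by_cases hk : k = j <;> simp [hk, hM, isCompact_Icc]
  have hne : ∀ (M : Set ℝ), M.Nonempty → ∀ R, (cyl M R).Nonempty := by
    intro M hM R
    rw [hcyl]
    refine Set.univ_pi_nonempty_iff.2 fun k => ?_
    by_cases hk : k = j
    · simp [hk, hM]
    · simp only [hk, if_false]
      exact Set.nonempty_Icc.2 ((neg_nonpos.2 (Nat.cast_nonneg R)).trans (Nat.cast_nonneg R))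
  have hmono : ∀ (M : Set ℝ), Monotone (cyl M) := by
    intro M R S hRS
    refine Set.pi_mono fun k _ => ?_
    by_cases hk : k = j <;> simp only [hk, if_true, if_false, hcyl]
    · exact subset_rfl
    · exact Set.Icc_subset_Icc (by exact_mod_cast neg_le_neg (Nat.cast_le.2 hRS)) (by exact_mod_cast hRS)
  have hunion : ∀ (M : Set ℝ), (⋃ R, {ω | Z ω ∈ cyl M R}) = {ω | Z ω j ∈ M} := by
    intro M
    ext ω
    simp only [Set.mem_iUnion, Set.mem_setOf_eq]
    constructor
    · rintro ⟨R, hR⟩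
      have := hR j (Set.mem_univ j)
      simpa using this
    · intro hM
      obtain ⟨R, hR⟩ := exists_nat_ge (∑ k, |Z ω k|)
      refine ⟨R, fun k _ => ?_⟩
      by_cases hk : k = j
      · simpa [hk] using hM
      · simp only [hk, if_false]
        have h1 : |Z ω k| ≤ ∑ k, |Z ω k| :=
          Finset.single_le_sum (f := fun k => |Z ω k|) (fun _ _ => abs_nonneg _) (Finset.mem_univ k)
        have := abs_le.1 (h1.trans hR)
        exact ⟨this.1, this.2⟩
  have hincl : ∀ R, {ω | Z ω ∈ lam • cyl K R + (1 - lam) • cyl L R} ⊆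
      {ω | Z ω j ∈ lam • K + (1 - lam) • L} := by
    intro R ω hω
    obtain ⟨u, hu, v, hv, huv⟩ := Set.mem_add.1 hω
    obtain ⟨x, hx, rfl⟩ := hu
    obtain ⟨y, hy, rfl⟩ := hv
    have hxj : x j ∈ K := by simpa using hx j (Set.mem_univ j)
    have hyj : y j ∈ L := by simpa using hy j (Set.mem_univ j)
    have : Z ω j = lam * x j + (1 - lam) * y j := by
      rw [← huv]; simp
    rw [Set.mem_setOf_eq, this]
    exact Set.add_mem_add (Set.smul_mem_smul_set hxj) (Set.smul_mem_smul_set hyj)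
  have hevmono : ∀ M : Set ℝ, Monotone (fun R => {ω | Z ω ∈ cyl M R}) :=
    fun M R S hRS => Set.preimage_mono (hmono M hRS)
  have hev : ∀ M : Set ℝ, P {ω | Z ω j ∈ M} = ⨆ R, P {ω | Z ω ∈ cyl M R} := by
    intro M
    rw [← hunion M]
    exact Directed.measure_iUnion (hevmono M).directed_le
  have hamono : ∀ M : Set ℝ, Monotone (fun R => P {ω | Z ω ∈ cyl M R}) :=
    fun M R S hRS => measure_mono (hevmono M hRS)
  rw [hev K, hev L, iSup_rpow_nat hlam.1, iSup_rpow_nat (by linarith [hlam.2] : (0:ℝ) ≤ 1 - lam),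
    ENNReal.iSup_mul]
  refine iSup_le fun R => ?_
  rw [ENNReal.mul_iSup]
  refine iSup_le fun S => ?_
  calc P {ω | Z ω ∈ cyl K R} ^ lam * P {ω | Z ω ∈ cyl L S} ^ (1 - lam)
      ≤ P {ω | Z ω ∈ cyl K (max R S)} ^ lam * P {ω | Z ω ∈ cyl L (max R S)} ^ (1 - lam) :=
        mul_le_mul' (ENNReal.rpow_le_rpow (hamono K (le_max_left R S)) hlam.1)
          (ENNReal.rpow_le_rpow (hamono L (le_max_right R S)) (by linarith [hlam.2]))
    _ ≤ P {ω | Z ω ∈ lam • cyl K (max R S) + (1 - lam) • cyl L (max R S)} :=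
        h _ _ (hne K hKne _) (hne L hLne _) (hcompact K hKc _) (hcompact L hLc _) lam hlam
    _ ≤ P {ω | Z ω j ∈ lam • K + (1 - lam) • L} := measure_mono (hincl (max R S))

lemma lc_tail {Ω : Type*} [MeasurableSpace Ω] (P : Measure Ω) [IsProbabilityMeasure P]
    {X : Ω → ℝ} (hX : Measurable X) (h : LC1 P X) (hvar : ∫ ω, X ω * X ω ∂P = 1)
    {s : ℝ} (hs : 1 ≤ s) :
    P {ω | 2 * s ≤ |X ω|} ≤ ENNReal.ofReal (Real.exp (-(s/2) * Real.log 3)) := by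
  -- integrability of X²
  have hint : Integrable (fun ω => X ω * X ω) P := by
    by_contra hc
    rw [integral_undef hc] at hvar
    norm_num at hvar
  -- Chebyshev
  have hcheb : P {ω | 2 ≤ |X ω|} ≤ ENNReal.ofReal (1/4) := by
    have hset : {ω | 2 ≤ |X ω|} = {ω | (4:ℝ) ≤ X ω * X ω} := by
      ext ω
      simp only [Set.mem_setOf_eq]
      constructor
      · intro h2
        calc (4:ℝ) = 2 * 2 := by norm_num
          _ ≤ |X ω| * |X ω| := by
              exact mul_le_mul h2 h2 (by norm_num) (abs_nonneg _)
          _ = X ω * X ω := abs_mul_abs_self _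
      · intro h4
        nlinarith [abs_nonneg (X ω), abs_mul_abs_self (X ω)]
    have hm := mul_meas_ge_le_integral_of_nonneg
      (f := fun ω => X ω * X ω) (μ := P) (Filter.Eventually.of_forall fun ω => mul_self_nonneg _)
      hint 4
    rw [hvar] at hm
    rw [hset]
    have hfin : P {ω | (4:ℝ) ≤ X ω * X ω} ≠ ∞ := measure_ne_top _ _
    rw [← ENNReal.ofReal_toReal hfin]
    exact ENNReal.ofReal_le_ofReal (by rw [measureReal_def] at hm; linarith)
  -- the central interval has mass ≥ 3/4
  have hL : ENNReal.ofReal (3/4) ≤ P {ω | X ω ∈ Set.Icc (-2:ℝ) 2} := by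
    have hco : {ω | X ω ∈ Set.Icc (-2:ℝ) 2} = {ω | 2 < |X ω|}ᶜ := by
      ext ω
      simp [Set.mem_Icc, abs_le, not_lt, and_comm]
    have hms : MeasurableSet {ω | 2 < |X ω|} :=
      measurableSet_lt measurable_const hX.abs
    rw [hco, prob_compl_eq_one_sub hms]
    have h1 : P {ω | 2 < |X ω|} ≤ ENNReal.ofReal (1/4) := by
      refine le_trans (measure_mono ?_) hcheb
      intro ω hω
      simp only [Set.mem_setOf_eq] at hω ⊢
      exact hω.le
    calc ENNReal.ofReal (3/4) = 1 - ENNReal.ofReal (1/4) := by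
          rw [← ENNReal.ofReal_one, ← ENNReal.ofReal_sub _ (by norm_num)]
          norm_num
      _ ≤ 1 - P {ω | 2 < |X ω|} := tsub_le_tsub_left h1 1
  -- main estimate for truncated tail sets
  set lam : ℝ := 2 / (s + 1) with hlamdef
  have hs1 : (0:ℝ) < s + 1 := by linarith
  have hlam0 : 0 < lam := by positivity
  have hlam1 : lam ≤ 1 := by
    rw [div_le_one hs1]; linarith
  have hmain : ∀ R : ℕ, P {ω | X ω ∈ Set.Icc (2*s) R ∪ Set.Icc (-(R:ℝ)) (-(2*s))} ≤
      ENNReal.ofReal (Real.exp (-(s/2) * Real.log 3)) := by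
    intro R
    by_cases hR : 2 * s ≤ (R:ℝ)
    swap
    · have : Set.Icc (2*s) (R:ℝ) ∪ Set.Icc (-(R:ℝ)) (-(2*s)) = ∅ := by
        rw [Set.Icc_eq_empty (fun hc => hR hc), Set.Icc_eq_empty, Set.empty_union]
        intro hc
        have := neg_le_neg hc
        simp only [neg_neg] at this
        exact hR this
      simp [this]
    set K : Set ℝ := Set.Icc (2*s) R ∪ Set.Icc (-(R:ℝ)) (-(2*s)) with hKdef
    set L : Set ℝ := Set.Icc (-2:ℝ) 2 with hLdef
    have hKne : K.Nonempty := ⟨2*s, Or.inl ⟨le_refl _, hR⟩⟩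
    have hLne : L.Nonempty := ⟨0, by norm_num [hLdef]⟩
    have hKc : IsCompact K := (isCompact_Icc).union isCompact_Icc
    have hLc : IsCompact L := isCompact_Icc
    have habs : ∀ x ∈ K, 2 * s ≤ |x| := by
      intro x hx
      rcases hx with hx | hx
      · rw [abs_of_nonneg (le_trans (by linarith) hx.1)]; exact hx.1
      · rw [abs_of_nonpos (le_trans hx.2 (by linarith))]; linarith [hx.2]
    -- the inclusion
    have hincl : {ω | X ω ∈ lam • K + (1 - lam) • L} ⊆ {ω | 2 ≤ |X ω|} := by
      intro ω hω
      obtain ⟨u, hu, v, hv, huv⟩ := Set.mem_add.1 hω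
      obtain ⟨x, hx, rfl⟩ := hu
      obtain ⟨y, hy, rfl⟩ := hv
      simp only [smul_eq_mul] at huv
      have hxa : 2 * s ≤ |x| := habs x hx
      have hya : |y| ≤ 2 := abs_le.2 ⟨hy.1, hy.2⟩
      have key : 2 ≤ |lam * x + (1 - lam) * y| := by
        have h1 : lam * |x| - (1 - lam) * |y| ≤ |lam * x + (1 - lam) * y| := by
          calc lam * |x| - (1 - lam) * |y| = |lam * x| - |(1 - lam) * y| := by
                rw [abs_mul, abs_mul, abs_of_nonneg hlam0.le, abs_of_nonneg (show (0:ℝ) ≤ 1 - lam by linarith)]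
            _ ≤ |lam * x + (1 - lam) * y| := by
                have := abs_add_le (lam * x + (1 - lam) * y) (-((1-lam) * y))
                simp only [add_neg_cancel_right, abs_neg] at this
                linarith
        have h2 : lam * (2 * s) - (1 - lam) * 2 ≤ lam * |x| - (1 - lam) * |y| := by
          have := mul_le_mul_of_nonneg_left hxa hlam0.le
          have := mul_le_mul_of_nonneg_left hya (by linarith : (0:ℝ) ≤ 1 - lam)
          linarith
        have h3 : lam * (2 * s) - (1 - lam) * 2 = 2 := by
          have h' : lam * (s + 1) = 2 := by rw [hlamdef]; exact div_mul_cancel₀ 2 hs1.ne'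
          linarith
        linarith
      rw [Set.mem_setOf_eq, ← huv]
      exact key
    have happ := h K L hKne hLne hKc hLc lam ⟨hlam0.le, hlam1⟩
    have hchain : P {ω | X ω ∈ K} ^ lam * ENNReal.ofReal (3/4) ≤ ENNReal.ofReal (1/4) := by
      calc P {ω | X ω ∈ K} ^ lam * ENNReal.ofReal (3/4)
          ≤ P {ω | X ω ∈ K} ^ lam * P {ω | X ω ∈ L} ^ (1 - lam) := by
            refine mul_le_mul_right ?_ _
            calc ENNReal.ofReal (3/4) ≤ P {ω | X ω ∈ L} := hL
              _ = P {ω | X ω ∈ L} ^ (1:ℝ) := (ENNReal.rpow_one _).symm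
              _ ≤ P {ω | X ω ∈ L} ^ (1 - lam) := by
                  refine ENNReal.rpow_le_rpow_of_exponent_ge ?_ (by linarith)
                  exact prob_le_one
        _ ≤ P {ω | X ω ∈ lam • K + (1 - lam) • L} := happ
        _ ≤ P {ω | 2 ≤ |X ω|} := measure_mono hincl
        _ ≤ ENNReal.ofReal (1/4) := hcheb
    have hKlam : P {ω | X ω ∈ K} ^ lam ≤ ENNReal.ofReal (1/3) := by
      have h34 : ENNReal.ofReal ((3:ℝ)/4) ≠ 0 := by
        simp [ENNReal.ofReal_eq_zero]
      have h34' : ENNReal.ofReal ((3:ℝ)/4) ≠ ∞ := ENNReal.ofReal_ne_top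
      rw [← ENNReal.mul_le_mul_iff_left h34 h34']
      calc P {ω | X ω ∈ K} ^ lam * ENNReal.ofReal (3/4) ≤ ENNReal.ofReal (1/4) := hchain
        _ = ENNReal.ofReal (1/3) * ENNReal.ofReal (3/4) := by
            rw [← ENNReal.ofReal_mul (by norm_num)]
            norm_num
    have hK3 : P {ω | X ω ∈ K} ≤ ENNReal.ofReal (Real.exp (-(s/2) * Real.log 3)) := by
      have h1 : P {ω | X ω ∈ K} = (P {ω | X ω ∈ K} ^ lam) ^ (1/lam) := by
        rw [← ENNReal.rpow_mul, mul_one_div_cancel hlam0.ne', ENNReal.rpow_one]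
      rw [h1]
      calc (P {ω | X ω ∈ K} ^ lam) ^ (1/lam)
          ≤ ENNReal.ofReal (1/3) ^ (1/lam) := ENNReal.rpow_le_rpow hKlam (by positivity)
        _ ≤ ENNReal.ofReal (Real.exp (-(s/2) * Real.log 3)) := by
            rw [ENNReal.ofReal_rpow_of_pos (show (0:ℝ) < 1/3 by norm_num)]
            refine ENNReal.ofReal_le_ofReal ?_
            have h13 : ((1:ℝ)/3) ^ (1/lam) = Real.exp (-(1/lam) * Real.log 3) := by
              rw [Real.rpow_def_of_pos (by norm_num)]
              congr 1
              rw [Real.log_div one_ne_zero (by norm_num), Real.log_one]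
              ring
            rw [h13, Real.exp_le_exp]
            have hll : 1/lam = (s+1)/2 := by
              rw [hlamdef]
              field_simp
            rw [hll]
            have hlog3 : 0 < Real.log 3 := Real.log_pos (by norm_num)
            nlinarith
    exact hK3.trans_eq rfl
  -- pass to the union over R
  have hun : {ω | 2 * s ≤ |X ω|} =
      ⋃ R : ℕ, {ω | X ω ∈ Set.Icc (2*s) R ∪ Set.Icc (-(R:ℝ)) (-(2*s))} := by
    ext ω
    simp only [Set.mem_iUnion, Set.mem_setOf_eq, Set.mem_union, Set.mem_Icc]
    constructor
    · intro h2s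
      obtain ⟨R, hR⟩ := exists_nat_ge (|X ω|)
      refine ⟨R, ?_⟩
      rcases le_or_gt 0 (X ω) with hx | hx
      · left
        rw [abs_of_nonneg hx] at h2s hR
        exact ⟨h2s, hR⟩
      · right
        rw [abs_of_neg hx] at h2s hR
        constructor <;> linarith
    · rintro ⟨R, hR | hR⟩
      · rw [abs_of_nonneg (le_trans (by linarith) hR.1)]; exact hR.1
      · rw [abs_of_nonpos (le_trans hR.2 (by linarith))]; linarith [hR.2]
  have hevmono : Monotone (fun R : ℕ =>
      {ω | X ω ∈ Set.Icc (2*s) R ∪ Set.Icc (-(R:ℝ)) (-(2*s))}) := by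
    intro R S hRS ω hω
    rcases hω with h | h
    · exact Or.inl ⟨h.1, h.2.trans (Nat.cast_le.2 hRS)⟩
    · exact Or.inr ⟨le_trans (neg_le_neg (Nat.cast_le.2 hRS)) h.1, h.2⟩
  rw [hun, Directed.measure_iUnion hevmono.directed_le]
  exact iSup_le hmain

lemma base_ineq {L s : ℝ} (hs : 1 ≤ s) (hL1 : 1 ≤ L) (hL2 : L ≤ 2) (k : ℕ) :
    (2 * k + 2) * Real.exp (-(L / (4 * s) * k)) ≤ 8 * s := by
  set α : ℝ := L / (4 * s) with hα
  have hs0 : (0:ℝ) < s := by linarith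
  have hα0 : 0 < α := by positivity
  have hα1 : α ≤ 1 := by
    rw [hα, div_le_one (by positivity)]
    linarith
  have h1 : α * (k + 1) * Real.exp (-(α * (k + 1))) ≤ Real.exp (-1) := by
    calc α * (k + 1) * Real.exp (-(α * (k + 1)))
        ≤ Real.exp (α * (k + 1) - 1) * Real.exp (-(α * (k + 1))) := by
          refine mul_le_mul_of_nonneg_right ?_ (Real.exp_nonneg _)
          linarith [Real.add_one_le_exp (α * (k + 1) - 1)]
      _ = Real.exp (-1) := by rw [← Real.exp_add]; ring_nf
  have h2 : (2 * (k:ℝ) + 2) * Real.exp (-(α * k)) =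
      (2 / α) * (α * (k + 1) * Real.exp (-(α * (k + 1)))) * Real.exp α := by
    have he : Real.exp (-(α * ((k:ℝ) + 1))) * Real.exp α = Real.exp (-(α * k)) := by
      rw [← Real.exp_add]; congr 1; ring
    calc (2 * (k:ℝ) + 2) * Real.exp (-(α * k))
        = (2 / α * (α * ((k:ℝ)+1))) * (Real.exp (-(α * ((k:ℝ)+1))) * Real.exp α) := by
          rw [he]; field_simp
      _ = (2 / α) * (α * ((k:ℝ) + 1) * Real.exp (-(α * ((k:ℝ) + 1)))) * Real.exp α := by ring
  rw [h2]
  have h3 : (2 / α) * (α * (k + 1) * Real.exp (-(α * (k + 1)))) * Real.exp α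
      ≤ (2 / α) * Real.exp (-1) * Real.exp α := by
    refine mul_le_mul_of_nonneg_right (mul_le_mul_of_nonneg_left h1 (by positivity))
      (Real.exp_nonneg _)
  have h4 : (2 / α) * Real.exp (-1) * Real.exp α ≤ 2 / α := by
    rw [mul_assoc, ← Real.exp_add]
    have : Real.exp (-1 + α) ≤ 1 := Real.exp_le_one_iff.2 (by linarith)
    nlinarith [div_pos (by norm_num : (0:ℝ) < 2) hα0]
  have h5 : 2 / α ≤ 8 * s := by
    rw [hα]
    rw [div_le_iff₀ (by positivity)]
    have : (8:ℝ) * s * (L / (4 * s)) = 2 * L := by field_simp; ring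
    rw [this]
    linarith
  linarith

lemma lc_moment {Ω : Type*} [MeasurableSpace Ω] (P : Measure Ω) [IsProbabilityMeasure P]
    {X : Ω → ℝ} (hX : Measurable X) (h : LC1 P X) (hvar : ∫ ω, X ω * X ω ∂P = 1)
    {s : ℝ} (hs : 1 ≤ s) :
    ∫⁻ ω, ENNReal.ofReal (|X ω| ^ s) ∂P ≤ ENNReal.ofReal ((40 * s) ^ s) := by
  set L : ℝ := Real.log 3 with hLdef
  have hL1 : 1 ≤ L := by
    rw [hLdef, Real.le_log_iff_exp_le (by norm_num)]
    exact le_trans Real.exp_one_lt_d9.le (by norm_num)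
  have hL2 : L ≤ 2 := by
    have := Real.log_le_sub_one_of_pos (show (0:ℝ) < 3 by norm_num)
    linarith
  have hs0 : (0:ℝ) < s := by linarith
  set A : ℕ → Set Ω := fun k => {ω | |X ω| ∈ Set.Ico (2*(k:ℝ)) (2*k+2)} with hA
  have huniv : (Set.univ : Set Ω) = ⋃ k, A k := by
    ext ω
    simp only [Set.mem_univ, true_iff, Set.mem_iUnion, hA, Set.mem_setOf_eq, Set.mem_Ico]
    refine ⟨⌊|X ω| / 2⌋₊, ?_, ?_⟩
    · have := Nat.floor_le (show (0:ℝ) ≤ |X ω| / 2 by positivity)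
      linarith
    · have := Nat.lt_floor_add_one (|X ω| / 2)
      linarith
  -- tail bound for each k
  have htail : ∀ k : ℕ, P (A k) ≤ ENNReal.ofReal (Real.exp (-((k:ℝ)/2) * L)) := by
    intro k
    rcases Nat.eq_zero_or_pos k with rfl | hk
    · simp only [Nat.cast_zero]
      norm_num
      exact prob_le_one
    · refine le_trans (measure_mono ?_) (lc_tail P hX h hvar (Nat.one_le_cast.2 hk))
      intro ω hω
      exact hω.1
  -- per-piece bound
  have hpiece : ∀ k : ℕ, (∫⁻ ω in A k, ENNReal.ofReal (|X ω| ^ s) ∂P) ≤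
      ENNReal.ofReal ((8*s) ^ s) * ENNReal.ofReal (Real.exp (-(L/4))) ^ k := by
    intro k
    have hb : ∀ ω ∈ A k, ENNReal.ofReal (|X ω| ^ s) ≤ ENNReal.ofReal ((2*(k:ℝ)+2) ^ s) := by
      intro ω hω
      exact ENNReal.ofReal_le_ofReal
        (Real.rpow_le_rpow (abs_nonneg _) hω.2.le hs0.le)
    calc (∫⁻ ω in A k, ENNReal.ofReal (|X ω| ^ s) ∂P)
        ≤ ∫⁻ _ in A k, ENNReal.ofReal ((2*(k:ℝ)+2) ^ s) ∂P :=
          setLIntegral_mono measurable_const hb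
      _ = ENNReal.ofReal ((2*(k:ℝ)+2) ^ s) * P (A k) := setLIntegral_const _ _
      _ ≤ ENNReal.ofReal ((2*(k:ℝ)+2) ^ s) * ENNReal.ofReal (Real.exp (-((k:ℝ)/2) * L)) :=
          mul_le_mul_right (htail k) _
      _ = ENNReal.ofReal ((2*(k:ℝ)+2) ^ s * Real.exp (-((k:ℝ)/2) * L)) := by
          rw [← ENNReal.ofReal_mul (by positivity)]
      _ ≤ ENNReal.ofReal ((8*s) ^ s * Real.exp (-(L/4)) ^ k) := by
          refine ENNReal.ofReal_le_ofReal ?_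
          -- key real inequality
          have hbase := base_ineq hs hL1 hL2 k
          have hsplit : Real.exp (-((k:ℝ)/2) * L) =
              Real.exp (-(L / (4*s) * k)) ^ s * Real.exp (-(L/4)) ^ k := by
            rw [← Real.exp_mul, ← Real.exp_nat_mul, ← Real.exp_add]
            congr 1
            field_simp
            ring
          rw [hsplit, ← mul_assoc]
          refine mul_le_mul_of_nonneg_right ?_ (by positivity)
          calc (2*(k:ℝ)+2) ^ s * Real.exp (-(L / (4*s) * k)) ^ s
              = ((2*(k:ℝ)+2) * Real.exp (-(L / (4*s) * k))) ^ s := by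
                rw [← Real.mul_rpow (by positivity) (Real.exp_nonneg _)]
            _ ≤ (8*s) ^ s := Real.rpow_le_rpow (by positivity) hbase hs0.le
      _ = ENNReal.ofReal ((8*s) ^ s) * ENNReal.ofReal (Real.exp (-(L/4))) ^ k := by
          rw [ENNReal.ofReal_mul (by positivity), ENNReal.ofReal_pow (Real.exp_nonneg _)]
  -- sum up
  have hρ : ENNReal.ofReal (Real.exp (-(L/4))) ≤ ENNReal.ofReal (4/5) := by
    refine ENNReal.ofReal_le_ofReal ?_
    have h54 : (5/4:ℝ) ≤ Real.exp (L/4) := by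
      refine le_of_pow_le_pow_left₀ (n := 4) (by norm_num) (Real.exp_nonneg _) ?_
      rw [← Real.exp_nat_mul]
      have h4 : (4:ℕ) * (L/4) = L := by push_cast; ring
      rw [h4, hLdef, Real.exp_log (by norm_num : (0:ℝ) < 3)]
      norm_num
    rw [Real.exp_neg]
    rw [inv_le_comm₀ (Real.exp_pos _) (by norm_num)]
    linarith [h54]
  calc ∫⁻ ω, ENNReal.ofReal (|X ω| ^ s) ∂P
      = ∫⁻ ω in Set.univ, ENNReal.ofReal (|X ω| ^ s) ∂P := (setLIntegral_univ _).symm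
    _ = ∫⁻ ω in ⋃ k, A k, ENNReal.ofReal (|X ω| ^ s) ∂P := by rw [← huniv]
    _ ≤ ∑' k, ∫⁻ ω in A k, ENNReal.ofReal (|X ω| ^ s) ∂P := lintegral_iUnion_le _ _
    _ ≤ ∑' k, ENNReal.ofReal ((8*s) ^ s) * ENNReal.ofReal (Real.exp (-(L/4))) ^ k :=
        ENNReal.tsum_le_tsum hpiece
    _ = ENNReal.ofReal ((8*s) ^ s) * ∑' k, ENNReal.ofReal (Real.exp (-(L/4))) ^ k :=
        ENNReal.tsum_mul_left
    _ ≤ ENNReal.ofReal ((8*s) ^ s) * ENNReal.ofReal 5 := by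
        refine mul_le_mul_right ?_ _
        rw [ENNReal.tsum_geometric]
        have h15 : ENNReal.ofReal (1/5) ≤ 1 - ENNReal.ofReal (Real.exp (-(L/4))) := by
          calc ENNReal.ofReal (1/5) = 1 - ENNReal.ofReal (4/5) := by
                rw [← ENNReal.ofReal_one, ← ENNReal.ofReal_sub _ (by norm_num)]
                norm_num
            _ ≤ 1 - ENNReal.ofReal (Real.exp (-(L/4))) := tsub_le_tsub_left hρ 1
        calc (1 - ENNReal.ofReal (Real.exp (-(L/4))))⁻¹ ≤ (ENNReal.ofReal (1/5))⁻¹ :=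
              ENNReal.inv_le_inv' h15
          _ = ENNReal.ofReal 5 := by
              rw [← ENNReal.ofReal_inv_of_pos (by norm_num)]
              norm_num
    _ ≤ ENNReal.ofReal ((40*s) ^ s) := by
        rw [← ENNReal.ofReal_mul (by positivity)]
        refine ENNReal.ofReal_le_ofReal ?_
        have h40 : (40*s:ℝ) ^ s = 5 ^ s * (8*s) ^ s := by
          rw [← Real.mul_rpow (by norm_num) (by positivity)]
          congr 1
          ring
        rw [h40]
        have h5s : (5:ℝ) ≤ 5 ^ s := by
          calc (5:ℝ) = 5 ^ (1:ℝ) := (Real.rpow_one _).symm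
            _ ≤ 5 ^ s := Real.rpow_le_rpow_of_exponent_le (by norm_num) hs
        nlinarith [Real.rpow_nonneg (by positivity : (0:ℝ) ≤ 8*s) s]

lemma minkowski_finset {α : Type*} [MeasurableSpace α] (μ : Measure α) {ι : Type*}
    (t : Finset ι) (f : ι → α → ℝ≥0∞) (hf : ∀ i, Measurable (f i)) {r : ℝ} (hr : 1 ≤ r) :
    (∫⁻ a, (∑ i ∈ t, f i a) ^ r ∂μ) ^ (1/r) ≤ ∑ i ∈ t, (∫⁻ a, f i a ^ r ∂μ) ^ (1/r) := by
  classical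
  induction t using Finset.induction_on with
  | empty =>
    simp only [Finset.sum_empty]
    rw [ENNReal.zero_rpow_of_pos (by linarith), lintegral_zero,
      ENNReal.zero_rpow_of_pos (by positivity)]
  | insert i t' hnotmem ih =>
    simp only [Finset.sum_insert hnotmem]
    calc (∫⁻ a, (f i a + ∑ k ∈ t', f k a) ^ r ∂μ) ^ (1/r)
        ≤ (∫⁻ a, f i a ^ r ∂μ) ^ (1/r) + (∫⁻ a, (∑ k ∈ t', f k a) ^ r ∂μ) ^ (1/r) := by
          have := ENNReal.lintegral_Lp_add_le (μ := μ)
            (hf i).aemeasurable (Finset.measurable_sum t' fun k _ => hf k).aemeasurable hr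
          simpa using this
      _ ≤ (∫⁻ a, f i a ^ r ∂μ) ^ (1/r) + ∑ k ∈ t', (∫⁻ a, f k a ^ r ∂μ) ^ (1/r) :=
          add_le_add_right ih _

lemma lintegral_le_rpow_prob {Ω : Type*} [MeasurableSpace Ω] (P : Measure Ω)
    [IsProbabilityMeasure P] {f : Ω → ℝ≥0∞} (hf : Measurable f) {q : ℝ} (hq : 1 < q) :
    ∫⁻ ω, f ω ∂P ≤ (∫⁻ ω, f ω ^ q ∂P) ^ (1/q) := by
  have hpq := Real.HolderConjugate.conjExponent hq
  have := ENNReal.lintegral_mul_le_Lp_mul_Lq P hpq hf.aemeasurable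
    (aemeasurable_const (b := (1:ℝ≥0∞)))
  simp only [Pi.mul_apply, mul_one, ENNReal.one_rpow, lintegral_one, measure_univ,
    ENNReal.one_rpow] at this
  simpa using this

theorem statement14 (γ p : ℝ) (hγ : 0 < γ) (hp : max 1 (1 / γ) ≤ p) :
    ∃ C : ℝ, 0 < C ∧
      ∀ (m n : ℕ), 2 ≤ m → 1 ≤ n →
      ∀ (Ω : Type) [MeasurableSpace Ω] (P : Measure Ω), IsProbabilityMeasure P →
      ∀ Z : Ω → Fin m → Fin n → ℝ, Measurable Z →
        (∀ i, IsLogConcave P (fun ω => Z ω i)) →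
        (∀ i, IsIsotropic P (fun ω => Z ω i)) →
      ∀ B : Fin m → Fin n → ℝ,
        (∫ ω, ⨆ i, (∑ j, |B i j| ^ p * |Z ω i j| ^ (p * γ)) ^ (1 / p) ∂P) ≤
          C * (Real.log m) ^ γ * ⨆ i, (∑ j, |B i j| ^ p) ^ (1 / p) := by
  have hp1 : 1 ≤ p := le_trans (le_max_left _ _) hp
  have hp0 : 0 < p := by linarith
  have hpinv : 1 / γ ≤ p := le_trans (le_max_right _ _) hp
  have hpγ : 1 ≤ p * γ := by
    rw [div_le_iff₀ hγ] at hpinv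
    linarith
  have hlog2 : 0 < Real.log 2 := Real.log_pos (by norm_num)
  set C₁ : ℝ := 40 * γ * (p / Real.log 2 + 1) with hC₁
  have hC₁0 : 0 < C₁ := by positivity
  refine ⟨3 * C₁ ^ γ, by positivity, ?_⟩
  intro m n hm hn Ω _ P hP Z hZ hlc hiso B
  haveI := hP
  haveI : Nonempty (Fin m) := ⟨⟨0, by omega⟩⟩
  -- exponents
  have hm2 : (2:ℝ) ≤ (m:ℝ) := by exact_mod_cast hm
  have hlogm : Real.log 2 ≤ Real.log m := Real.log_le_log (by norm_num) hm2
  have hlogm0 : 0 < Real.log m := lt_of_lt_of_le hlog2 hlogm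
  set q : ℝ := p + Real.log m with hqdef
  have hq1 : 1 < q := by rw [hqdef]; linarith
  have hq0 : 0 < q := by linarith
  have hpq : p ≤ q := by rw [hqdef]; linarith
  set s : ℝ := q * γ with hsdef
  have hs1 : 1 ≤ s := by
    have h1 : (1/γ) * γ ≤ q * γ := mul_le_mul_of_nonneg_right (le_trans hpinv hpq) hγ.le
    rw [one_div, inv_mul_cancel₀ hγ.ne'] at h1
    exact h1.trans_eq rfl
  set r : ℝ := q / p with hrdef
  have hr1 : 1 ≤ r := by rw [hrdef, le_div_iff₀ hp0]; linarith
  have hr0 : 0 < r := by linarith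
  -- coordinate properties
  have hXmeas : ∀ i j, Measurable (fun ω => Z ω i j) := fun i j =>
    (measurable_pi_apply j).comp ((measurable_pi_apply i).comp hZ)
  have hXlc : ∀ i j, LC1 P (fun ω => Z ω i j) := fun i j => lc_marginal P _ (hlc i) j
  have hXvar : ∀ i j, ∫ ω, Z ω i j * Z ω i j ∂P = 1 := fun i j => by
    simpa using (hiso i).2 j j
  have hmom : ∀ i j, ∫⁻ ω, ENNReal.ofReal (|Z ω i j| ^ s) ∂P ≤ ENNReal.ofReal ((40*s)^s) :=
    fun i j => lc_moment P (hXmeas i j) (hXlc i j) (hXvar i j) hs1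
  -- abbreviations
  have hrpowmeas : ∀ {f : Ω → ℝ}, Measurable f → ∀ {c : ℝ}, 0 ≤ c →
      Measurable (fun ω => f ω ^ c) := by
    intro f hf c hc
    exact (Real.continuous_rpow_const hc).measurable.comp hf
  have haj0 : ∀ (i : Fin m) (j : Fin n), (0:ℝ) ≤ |B i j| ^ p := fun i j =>
    Real.rpow_nonneg (abs_nonneg _) p
  have hterm0 : ∀ (i : Fin m) (j : Fin n) (ω : Ω), (0:ℝ) ≤ |B i j| ^ p * |Z ω i j| ^ (p*γ) :=
    fun i j ω => mul_nonneg (haj0 i j) (Real.rpow_nonneg (abs_nonneg _) _)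
  have hS0 : ∀ (i : Fin m) (ω : Ω), (0:ℝ) ≤ ∑ j, |B i j| ^ p * |Z ω i j| ^ (p*γ) :=
    fun i ω => Finset.sum_nonneg fun j _ => hterm0 i j ω
  have hY0 : ∀ (i : Fin m) (ω : Ω), (0:ℝ) ≤ (∑ j, |B i j| ^ p * |Z ω i j| ^ (p*γ)) ^ (1/p) :=
    fun i ω => Real.rpow_nonneg (hS0 i ω) _
  set Y : Fin m → Ω → ℝ := fun i ω => (∑ j, |B i j| ^ p * |Z ω i j| ^ (p*γ)) ^ (1/p) with hYdef
  set SB : ℝ := ⨆ i, (∑ j, |B i j| ^ p) ^ (1/p) with hSBdef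
  have hSB0 : 0 ≤ SB :=
    Real.iSup_nonneg fun i => Real.rpow_nonneg (Finset.sum_nonneg fun j _ => haj0 i j) _
  have hSBle : ∀ i, (∑ j, |B i j| ^ p) ^ (1/p) ≤ SB := fun i => by
    rw [hSBdef]
    exact le_ciSup (Finite.bddAbove_range fun i => (∑ j, |B i j| ^ p) ^ (1/p)) i
  set g : Fin m → Fin n → Ω → ℝ≥0∞ :=
    fun i j ω => ENNReal.ofReal (|B i j| ^ p * |Z ω i j| ^ (p*γ)) with hgdef
  have hgmeas : ∀ i j, Measurable (g i j) := fun i j =>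
    (measurable_const.mul (hrpowmeas (hXmeas i j).abs (by positivity))).ennreal_ofReal
  have hYmeas : ∀ i, Measurable (Y i) := fun i =>
    hrpowmeas (Finset.measurable_sum _ fun j _ =>
      measurable_const.mul (hrpowmeas (hXmeas i j).abs (by positivity))) (by positivity)
  have hErpow : ∀ {f : Ω → ℝ≥0∞}, Measurable f → ∀ (c : ℝ),
      Measurable (fun ω => f ω ^ c) := fun hf c =>
    (ENNReal.continuous_rpow_const).measurable.comp hf
  -- key per-row moment bound
  have hYq : ∀ i, ∫⁻ ω, ENNReal.ofReal (Y i ω) ^ q ∂P ≤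
      ENNReal.ofReal ((40*s)^s) * ENNReal.ofReal SB ^ q := by
    intro i
    have hpq2 : (1/p) * q = r := by rw [hrdef, one_div_mul_eq_div]
    have hpgr : p * γ * r = s := by rw [hrdef, hsdef]; field_simp
    have hrw : ∀ ω, ENNReal.ofReal (Y i ω) ^ q = (∑ j, g i j ω) ^ r := by
      intro ω
      simp only [hYdef, hgdef]
      rw [← ENNReal.ofReal_rpow_of_nonneg (hS0 i ω) (by positivity : (0:ℝ) ≤ 1/p),
        ← ENNReal.rpow_mul, hpq2,
        ENNReal.ofReal_sum_of_nonneg (fun j _ => hterm0 i j ω)]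
    have hj : ∀ j, (∫⁻ ω, g i j ω ^ r ∂P) ^ (1/r) ≤
        ENNReal.ofReal (|B i j| ^ p) * ENNReal.ofReal ((40*s) ^ (p*γ)) := by
      intro j
      have h1 : ∀ ω, g i j ω ^ r =
          ENNReal.ofReal (|B i j| ^ p) ^ r * ENNReal.ofReal (|Z ω i j| ^ s) := by
        intro ω
        simp only [hgdef]
        rw [ENNReal.ofReal_mul (haj0 i j), ENNReal.mul_rpow_of_nonneg _ _ hr0.le]
        congr 1
        rw [ENNReal.ofReal_rpow_of_nonneg (Real.rpow_nonneg (abs_nonneg _) _) hr0.le,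
          ← Real.rpow_mul (abs_nonneg _), hpgr]
      calc (∫⁻ ω, g i j ω ^ r ∂P) ^ (1/r)
          = (ENNReal.ofReal (|B i j| ^ p) ^ r *
              ∫⁻ ω, ENNReal.ofReal (|Z ω i j| ^ s) ∂P) ^ (1/r) := by
            rw [← lintegral_const_mul _
              ((hrpowmeas (hXmeas i j).abs (le_trans zero_le_one hs1)).ennreal_ofReal)]
            congr 1
            exact lintegral_congr h1
        _ ≤ (ENNReal.ofReal (|B i j| ^ p) ^ r * ENNReal.ofReal ((40*s)^s)) ^ (1/r) :=
            ENNReal.rpow_le_rpow (mul_le_mul_right (hmom i j) _) (by positivity)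
        _ = ENNReal.ofReal (|B i j| ^ p) * ENNReal.ofReal ((40*s) ^ (p*γ)) := by
            rw [ENNReal.mul_rpow_of_nonneg _ _ (by positivity),
              ← ENNReal.rpow_mul, mul_one_div_cancel hr0.ne', ENNReal.rpow_one,
              ENNReal.ofReal_rpow_of_nonneg (by positivity) (by positivity),
              ← Real.rpow_mul (by positivity),
              show s * (1/r) = p * γ by rw [hrdef, hsdef]; field_simp]
    have hsum0 : (0:ℝ) ≤ ∑ j, |B i j| ^ p := Finset.sum_nonneg fun j _ => haj0 i j
    calc ∫⁻ ω, ENNReal.ofReal (Y i ω) ^ q ∂P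
        = ∫⁻ ω, (∑ j, g i j ω) ^ r ∂P := lintegral_congr hrw
      _ = ((∫⁻ ω, (∑ j, g i j ω) ^ r ∂P) ^ (1/r)) ^ r := by
          rw [← ENNReal.rpow_mul, one_div_mul_cancel hr0.ne', ENNReal.rpow_one]
      _ ≤ (∑ j, ENNReal.ofReal (|B i j| ^ p) * ENNReal.ofReal ((40*s) ^ (p*γ))) ^ r := by
          refine ENNReal.rpow_le_rpow ?_ hr0.le
          refine le_trans (minkowski_finset P Finset.univ _ (fun j => hgmeas i j) hr1) ?_
          exact Finset.sum_le_sum fun j _ => hj j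
      _ = (ENNReal.ofReal (∑ j, |B i j| ^ p) * ENNReal.ofReal ((40*s) ^ (p*γ))) ^ r := by
          rw [← Finset.sum_mul, ENNReal.ofReal_sum_of_nonneg (fun j _ => haj0 i j)]
      _ = ENNReal.ofReal (∑ j, |B i j| ^ p) ^ r * ENNReal.ofReal ((40*s) ^ s) := by
          rw [ENNReal.mul_rpow_of_nonneg _ _ hr0.le]
          congr 1
          rw [ENNReal.ofReal_rpow_of_nonneg (by positivity) hr0.le,
            ← Real.rpow_mul (by positivity), hpgr]
      _ ≤ ENNReal.ofReal ((40*s) ^ s) * ENNReal.ofReal SB ^ q := by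
          rw [mul_comm]
          refine mul_le_mul_right ?_ _
          have h2 : ENNReal.ofReal (∑ j, |B i j| ^ p) ^ r
              = ENNReal.ofReal ((∑ j, |B i j| ^ p) ^ (1/p)) ^ q := by
            rw [ENNReal.ofReal_rpow_of_nonneg hsum0 hr0.le,
              ENNReal.ofReal_rpow_of_nonneg (Real.rpow_nonneg hsum0 _) hq0.le,
              ← Real.rpow_mul hsum0, hpq2]
          rw [h2]
          exact ENNReal.rpow_le_rpow (ENNReal.ofReal_le_ofReal (hSBle i)) hq0.le
  -- sum over rows
  have hsum : ∫⁻ ω, (⨆ i, ENNReal.ofReal (Y i ω)) ^ q ∂P ≤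
      (m : ℝ≥0∞) * (ENNReal.ofReal ((40*s)^s) * ENNReal.ofReal SB ^ q) := by
    calc ∫⁻ ω, (⨆ i, ENNReal.ofReal (Y i ω)) ^ q ∂P
        ≤ ∫⁻ ω, ∑ i, ENNReal.ofReal (Y i ω) ^ q ∂P := by
          refine lintegral_mono fun ω => ?_
          obtain ⟨i₀, hi₀⟩ := Finite.exists_max (fun i => ENNReal.ofReal (Y i ω))
          calc (⨆ i, ENNReal.ofReal (Y i ω)) ^ q ≤ ENNReal.ofReal (Y i₀ ω) ^ q :=
              ENNReal.rpow_le_rpow (iSup_le hi₀) hq0.le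
            _ ≤ ∑ i, ENNReal.ofReal (Y i ω) ^ q :=
              Finset.single_le_sum (f := fun i => ENNReal.ofReal (Y i ω) ^ q)
                (fun _ _ => by positivity) (Finset.mem_univ i₀)
      _ = ∑ i, ∫⁻ ω, ENNReal.ofReal (Y i ω) ^ q ∂P :=
          lintegral_finset_sum _ fun i _ => hErpow (hYmeas i).ennreal_ofReal q
      _ ≤ ∑ _i : Fin m, (ENNReal.ofReal ((40*s)^s) * ENNReal.ofReal SB ^ q) :=
          Finset.sum_le_sum fun i _ => hYq i
      _ = (m : ℝ≥0∞) * (ENNReal.ofReal ((40*s)^s) * ENNReal.ofReal SB ^ q) := by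
          rw [Finset.sum_const, Finset.card_univ, Fintype.card_fin, nsmul_eq_mul]
  have hFmeasE : Measurable (fun ω => ⨆ i, ENNReal.ofReal (Y i ω)) :=
    Measurable.iSup fun i => (hYmeas i).ennreal_ofReal
  -- the main lintegral bound
  have hI : ∫⁻ ω, (⨆ i, ENNReal.ofReal (Y i ω)) ∂P ≤
      ENNReal.ofReal (3 * C₁ ^ γ * Real.log m ^ γ * SB) := by
    have h40 : (40*s) ^ γ ≤ C₁ ^ γ * Real.log m ^ γ := by
      rw [← Real.mul_rpow hC₁0.le hlogm0.le]
      refine Real.rpow_le_rpow (by positivity) ?_ hγ.le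
      rw [hsdef, hqdef, hC₁]
      have hkey : p ≤ p / Real.log 2 * Real.log m := by
        rw [div_mul_eq_mul_div, le_div_iff₀ hlog2]
        nlinarith
      nlinarith [hγ.le, hlogm0.le, hlogm, hp0.le]
    calc ∫⁻ ω, (⨆ i, ENNReal.ofReal (Y i ω)) ∂P
        ≤ (∫⁻ ω, (⨆ i, ENNReal.ofReal (Y i ω)) ^ q ∂P) ^ (1/q) :=
          lintegral_le_rpow_prob P hFmeasE hq1
      _ ≤ ((m : ℝ≥0∞) * (ENNReal.ofReal ((40*s)^s) * ENNReal.ofReal SB ^ q)) ^ (1/q) :=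
          ENNReal.rpow_le_rpow hsum (by positivity)
      _ = (m : ℝ≥0∞) ^ (1/q) * ENNReal.ofReal ((40*s)^s) ^ (1/q) * ENNReal.ofReal SB := by
          rw [ENNReal.mul_rpow_of_nonneg _ _ (by positivity),
            ENNReal.mul_rpow_of_nonneg _ _ (by positivity),
            ← ENNReal.rpow_mul (ENNReal.ofReal SB), mul_one_div_cancel hq0.ne',
            ENNReal.rpow_one, ← mul_assoc]
      _ ≤ ENNReal.ofReal 3 * ENNReal.ofReal (C₁ ^ γ * Real.log m ^ γ) * ENNReal.ofReal SB := by
          refine mul_le_mul_left (mul_le_mul' ?_ ?_) _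
          · rw [← ENNReal.ofReal_natCast m,
              ENNReal.ofReal_rpow_of_nonneg (Nat.cast_nonneg m) (by positivity)]
            refine ENNReal.ofReal_le_ofReal ?_
            rw [Real.rpow_def_of_pos (by linarith : (0:ℝ) < (m:ℝ))]
            calc Real.exp (Real.log m * (1/q)) ≤ Real.exp 1 := by
                  rw [Real.exp_le_exp, mul_one_div, div_le_one hq0, hqdef]
                  linarith
              _ ≤ 3 := by linarith [Real.exp_one_lt_d9]
          · rw [ENNReal.ofReal_rpow_of_nonneg (by positivity) (by positivity)]
            refine ENNReal.ofReal_le_ofReal ?_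
            rw [← Real.rpow_mul (by positivity),
              show s * (1/q) = γ by rw [hsdef]; field_simp]
            exact h40
      _ = ENNReal.ofReal (3 * C₁ ^ γ * Real.log m ^ γ * SB) := by
          rw [← ENNReal.ofReal_mul (by norm_num), ← ENNReal.ofReal_mul (by positivity)]
          congr 1
          ring
  -- back to the Bochner integral
  have hF0 : ∀ ω, 0 ≤ ⨆ i, Y i ω := fun ω => Real.iSup_nonneg fun i => hY0 i ω
  have hFof : ∀ ω, ENNReal.ofReal (⨆ i, Y i ω) = ⨆ i, ENNReal.ofReal (Y i ω) := by
    intro ω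
    obtain ⟨i₀, hi₀⟩ := Finite.exists_max fun i => Y i ω
    have h1 : (⨆ i, Y i ω) = Y i₀ ω :=
      le_antisymm (ciSup_le hi₀) (le_ciSup (Finite.bddAbove_range fun i => Y i ω) i₀)
    have h2 : (⨆ i, ENNReal.ofReal (Y i ω)) = ENNReal.ofReal (Y i₀ ω) :=
      le_antisymm (iSup_le fun i => ENNReal.ofReal_le_ofReal (hi₀ i)) (le_iSup (fun i => ENNReal.ofReal (Y i ω)) i₀)
    rw [h1, h2]
  have hFmeas : Measurable fun ω => ⨆ i, Y i ω := by
    have heq : (fun ω => ⨆ i, Y i ω) = fun ω => (⨆ i, ENNReal.ofReal (Y i ω)).toReal := by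
      funext ω
      rw [← hFof ω, ENNReal.toReal_ofReal (hF0 ω)]
    rw [heq]
    exact hFmeasE.ennreal_toReal
  have hRHS0 : 0 ≤ 3 * C₁ ^ γ * Real.log m ^ γ * SB :=
    mul_nonneg (mul_nonneg (by positivity) (Real.rpow_nonneg hlogm0.le _)) hSB0
  have key : ∫ ω, (⨆ i, Y i ω) ∂P ≤ 3 * C₁ ^ γ * Real.log m ^ γ * SB := by
    rw [integral_eq_lintegral_of_nonneg_ae (Filter.Eventually.of_forall hF0)
      hFmeas.aestronglyMeasurable]
    have h1 : ∫⁻ ω, ENNReal.ofReal (⨆ i, Y i ω) ∂P ≤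
        ENNReal.ofReal (3 * C₁ ^ γ * Real.log m ^ γ * SB) := by
      calc ∫⁻ ω, ENNReal.ofReal (⨆ i, Y i ω) ∂P
          = ∫⁻ ω, (⨆ i, ENNReal.ofReal (Y i ω)) ∂P := lintegral_congr hFof
        _ ≤ _ := hI
    calc (∫⁻ ω, ENNReal.ofReal (⨆ i, Y i ω) ∂P).toReal
        ≤ (ENNReal.ofReal (3 * C₁ ^ γ * Real.log m ^ γ * SB)).toReal :=
          ENNReal.toReal_mono ENNReal.ofReal_ne_top h1
      _ = 3 * C₁ ^ γ * Real.log m ^ γ * SB := ENNReal.toReal_ofReal hRHS0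
  exact key

end
end
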